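/- arXiv:1704.07654 — 7 statements merged into one kernel-verified Lean document; each statement's English description precedes it below -/
import Mathlib

section
/- Let X be a finite-dimensional scheme (i.e., its underlying topological space has finite Krull dimension d). Then there exists a closed point x of X such that the local dimension of X at x equals d, where the local dimension at x is the infimum over open neighbourhoods U of x of the Krull dimension of U. -/
open AlgebraicGeometry
open TopologicalSpace Order

section Aux

variable {Y : Type*} [TopologicalSpace Y]

/-- A nonempty open piece of an irreducible closed set is dense in it. -/
lemma aux_closure_inter {Z U : Set Y} (hZ : IsIrreducible Z) (hZc : IsClosed Z)
    (hU : IsOpen U) (hne : (Z ∩ U).Nonempty) : closure (Z ∩ U) = Z := by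
  apply Set.Subset.antisymm (closure_minimal Set.inter_subset_left hZc)
  intro z hz
  rw [mem_closure_iff]
  intro V hV hzV
  obtain ⟨w, hwZ, hwU, hwV⟩ := hZ.2 U V hU hV hne ⟨z, hz, hzV⟩
  exact ⟨w, hwV, hwZ, hwU⟩

/-- Krull dimension of an open subspace is at most that of the ambient space. -/
lemma aux_dim_open_le (U : Set Y) (hU : IsOpen U) :
    topologicalKrullDim ↥U ≤ topologicalKrullDim Y := by
  apply krullDim_le_of_strictMono
    (fun V : IrreducibleCloseds ↥U =>
      (⟨closure (Subtype.val '' (V : Set ↥U)), (V.isIrreducible.image _ continuous_subtype_val.continuousOn).closure, isClosed_closure⟩ : IrreducibleCloseds Y))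
  have key : ∀ V : IrreducibleCloseds ↥U,
      (Subtype.val ⁻¹' closure (Subtype.val '' (V : Set ↥U)) : Set ↥U) = V := by
    intro V
    obtain ⟨C, hC, hCV⟩ := isClosed_induced_iff.mp V.isClosed
    apply Set.Subset.antisymm
    · intro y hy
      rw [← hCV]
      exact hC.closure_subset_iff.mpr (by rintro _ ⟨w, hw, rfl⟩; rw [← hCV] at hw; exact hw) hy
    · intro y hy
      exact subset_closure ⟨y, hy, rfl⟩
  intro a b hab
  refine lt_of_le_of_ne (closure_mono (Set.image_mono hab.le)) ?_
  intro h
  apply hab.ne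
  apply SetLike.coe_injective
  have : closure (Subtype.val '' (a : Set ↥U)) = closure (Subtype.val '' (b : Set ↥U)) :=
    congrArg (fun s : IrreducibleCloseds Y => (s : Set Y)) h
  rw [← key a, ← key b, this]

/-- Lower bound: a chain in `Y` through a point of `U` restricts to a chain in `U`. -/
lemma aux_dim_open_ge {U : Set Y} (hU : IsOpen U) {x : Y} (hx : x ∈ U)
    (p : LTSeries (IrreducibleCloseds Y)) (hp : ∀ i, x ∈ (p i : Set Y)) :
    (p.length : WithBot ℕ∞) ≤ topologicalKrullDim ↥U := by
  have hemb : Topology.IsOpenEmbedding (Subtype.val : ↥U → Y) := hU.isOpenEmbedding_subtypeVal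
  let q : LTSeries (IrreducibleCloseds ↥U) :=
    { length := p.length
      toFun := fun i =>
        ⟨Subtype.val ⁻¹' (p i : Set Y),
          ⟨⟨⟨x, hx⟩, hp i⟩, (p i).isIrreducible.2.preimage hemb⟩,
          (p i).isClosed.preimage continuous_subtype_val⟩
      step := by
        intro i
        have hlt := p.step i
        change (_ : IrreducibleCloseds Y) < _ at hlt
        change (_ : IrreducibleCloseds ↥U) < _
        refine lt_of_le_of_ne (SetLike.coe_subset_coe.mp fun y (hy : (y : Y) ∈ (p i.castSucc : Set Y)) => (SetLike.coe_subset_coe.mpr hlt.le) hy) ?_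
        intro h
        apply hlt.ne
        have himg : ∀ j : Fin (p.length + 1),
            (Subtype.val '' (Subtype.val ⁻¹' (p j : Set Y) : Set ↥U) : Set Y) = (p j : Set Y) ∩ U := by
          intro j
          rw [Subtype.image_preimage_coe]
          exact Set.inter_comm _ _
        have hc : ∀ j : Fin (p.length + 1),
            closure ((p j : Set Y) ∩ U) = (p j : Set Y) := fun j =>
          aux_closure_inter (p j).isIrreducible (p j).isClosed hU ⟨x, hp j, hx⟩
        apply SetLike.coe_injective
        have h' : (Subtype.val ⁻¹' (p i.castSucc : Set Y) : Set ↥U)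
            = Subtype.val ⁻¹' (p i.succ : Set Y) := congrArg SetLike.coe h
        have := congrArg (fun s : Set ↥U => closure (Subtype.val '' s)) h'
        simpa only [himg, hc] using this }
  exact_mod_cast Order.LTSeries.length_le_krullDim q

end Aux

/-- The local dimension of a topological space at a point: the infimum over open
neighbourhoods `U` of `x` of the Krull dimension of `U`. -/
noncomputable def localDim (X : Type*) [TopologicalSpace X] (x : X) : WithBot ℕ∞ :=
  ⨅ U : {U : Set X // IsOpen U ∧ x ∈ U}, topologicalKrullDim ↥U.1

theorem scheme_exists_closed_point_localDim_eq_dim (X : Scheme) (d : ℕ)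
    (hd : topologicalKrullDim X = (d : WithBot ℕ∞)) :
    ∃ x : X, IsClosed ({x} : Set X) ∧ localDim X x = (d : WithBot ℕ∞) := by
  classical
  haveI hne : Nonempty (IrreducibleCloseds X) := by
    by_contra h
    rw [not_nonempty_iff] at h
    rw [topologicalKrullDim, krullDim_eq_bot] at hd
    exact absurd hd (by simp)
  -- extract a chain of length at least d
  obtain ⟨p, hp⟩ : ∃ p : LTSeries (IrreducibleCloseds X), d ≤ p.length := by
    by_contra h
    push_neg at h
    have hsup : topologicalKrullDim X
        = ((⨆ p : LTSeries (IrreducibleCloseds X), (p.length : ℕ∞) : ℕ∞) : WithBot ℕ∞) := by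
      rw [topologicalKrullDim, krullDim_eq_iSup_length]
    rw [hd] at hsup
    have hd0 : d ≠ 0 := by
      intro h0
      exact absurd (h (RelSeries.singleton _ (Classical.arbitrary _))) (by omega)
    have : (d : ℕ∞) ≤ ((d - 1 : ℕ) : ℕ∞) := by
      rw [WithBot.coe_inj.mp hsup]
      exact iSup_le fun q => by exact_mod_cast Nat.le_pred_of_lt (h q)
    have : d ≤ d - 1 := by exact_mod_cast this
    omega
  -- the bottom of the chain is minimal
  have hmin : ∀ W : IrreducibleCloseds X, ¬ W < p 0 := by
    intro W hW
    have hlt : W < p.head := by simpa [RelSeries.head] using hW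
    have := Order.LTSeries.length_le_krullDim (p.cons W hlt)
    rw [show Order.krullDim (IrreducibleCloseds X) = topologicalKrullDim X from rfl, hd] at this
    have hlen : (p.cons W hlt).length = p.length + 1 := by
      simp
    rw [hlen] at this
    have : p.length + 1 ≤ d := by exact_mod_cast this
    omega
  -- generic point of the bottom
  set Z0 : IrreducibleCloseds X := p 0 with hZ0
  have hgen : IsGenericPoint Z0.isIrreducible.genericPoint (Z0 : Set X) :=
    Z0.isIrreducible.isGenericPoint_genericPoint Z0.isClosed
  set ξ : X := Z0.isIrreducible.genericPoint with hξ
  have hsingle : (Z0 : Set X) = {ξ} := by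
    apply Set.Subset.antisymm
    · intro y hy
      have hWle : closure ({y} : Set X) ⊆ (Z0 : Set X) :=
        closure_minimal (Set.singleton_subset_iff.mpr hy) Z0.isClosed
      set W : IrreducibleCloseds X :=
        ⟨closure {y}, isIrreducible_singleton.closure, isClosed_closure⟩ with hW
      have hWeq : W = Z0 := by
        by_contra hne'
        exact hmin W (lt_of_le_of_ne (fun z hz => hWle hz) hne')
      have hgy : IsGenericPoint y (Z0 : Set X) := by
        rw [IsGenericPoint, ← hWeq]; rfl
      exact (hgy.eq hgen) ▸ rfl
    · exact Set.singleton_subset_iff.mpr hgen.mem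
  have hclosed : IsClosed ({ξ} : Set X) := hsingle ▸ Z0.isClosed
  refine ⟨ξ, hclosed, ?_⟩
  have hxp : ∀ i, ξ ∈ (p i : Set X) := by
    intro i
    exact p.monotone (Fin.zero_le i) (hsingle ▸ rfl : ξ ∈ (Z0 : Set X))
  have hterm : ∀ U : {U : Set X // IsOpen U ∧ ξ ∈ U},
      topologicalKrullDim ↥U.1 = (d : WithBot ℕ∞) := by
    rintro ⟨U, hUo, hxU⟩
    apply le_antisymm
    · exact (aux_dim_open_le U hUo).trans hd.le
    · refine le_trans ?_ (aux_dim_open_ge hUo hxU p hxp)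
      exact_mod_cast hp
  rw [localDim]
  haveI : Nonempty {U : Set X // IsOpen U ∧ ξ ∈ U} := ⟨⟨Set.univ, isOpen_univ, trivial⟩⟩
  rw [iInf_congr hterm, iInf_const]
end

section
/- Let X be a sober, finite-dimensional topological space of dimension d. Then there exists a closed point x ∈ X such that every open neighbourhood of x has dimension at least d; i.e., the local dimension of X at x equals dim X. -/
open TopologicalSpace Order

private lemma my_length_le_krullDim {α : Type*} [Preorder α] (p : LTSeries α) :
    (p.length : WithBot ℕ∞) ≤ krullDim α := le_sSup ⟨p, rfl⟩

private lemma closure_inter_open_of_irred {X : Type*} [TopologicalSpace X] {Z U : Set X}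
    (hZ : IsPreirreducible Z) (hZc : IsClosed Z) (hU : IsOpen U) (hne : (Z ∩ U).Nonempty) :
    closure (Z ∩ U) = Z := by
  apply subset_antisymm (hZc.closure_subset_iff.mpr Set.inter_subset_left)
  intro z hz
  rw [mem_closure_iff]
  intro V hV hzV
  obtain ⟨w, hwZ, hwV, hwU⟩ := hZ V U hV hU ⟨z, hz, hzV⟩ hne
  exact ⟨w, hwV, hwZ, hwU⟩

/-- If `U` is an open set meeting every member of an `LTSeries` of irreducible closeds of `X`
(witnessed by a point `x` in the head), then `d ≤ dim U` where `d` is the length. -/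
private lemma le_dim_open {X : Type*} [TopologicalSpace X] {U : Set X} (hU : IsOpen U)
    (p : LTSeries (IrreducibleCloseds X)) {x : X} (hxU : x ∈ U) (hx : x ∈ p.head) :
    (p.length : WithBot ℕ∞) ≤ topologicalKrullDim ↥U := by
  have hxmem : ∀ i, x ∈ p i := fun i => p.monotone (Fin.zero_le i) hx
  have hclos : ∀ i, closure ((p i : Set X) ∩ U) = (p i : Set X) := fun i =>
    closure_inter_open_of_irred (p i).isIrreducible.2 (p i).isClosed hU ⟨x, hxmem i, hxU⟩
  let q : LTSeries (IrreducibleCloseds ↥U) :=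
    { length := p.length
      toFun := fun i =>
        { carrier := Subtype.val ⁻¹' (p i : Set X)
          isIrreducible' := ⟨⟨⟨x, hxU⟩, hxmem i⟩,
            (p i).isIrreducible.2.preimage hU.isOpenEmbedding_subtypeVal⟩
          isClosed' := (p i).isClosed.preimage continuous_subtype_val }
      step := by
        intro i
        have hlt := p.step i
        constructor
        · exact fun y hy => (le_of_lt hlt : (p i.castSucc : Set X) ⊆ _) hy
        · intro hle
          have heq : (Subtype.val ⁻¹' (p i.castSucc : Set X) : Set ↥U)
              = Subtype.val ⁻¹' (p i.succ : Set X) := by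
            apply subset_antisymm
            · exact fun y hy => (le_of_lt hlt : (p i.castSucc : Set X) ⊆ _) hy
            · exact fun y hy => hle hy
          have himg : (p i.castSucc : Set X) ∩ U = (p i.succ : Set X) ∩ U := by
            have := congrArg (Set.image (Subtype.val : ↥U → X)) heq
            rw [Subtype.image_preimage_coe, Subtype.image_preimage_coe] at this
            rw [Set.inter_comm, this, Set.inter_comm]
          have : (p i.castSucc : Set X) = (p i.succ : Set X) := by
            rw [← hclos i.castSucc, ← hclos i.succ, himg]
          exact absurd (IrreducibleCloseds.ext this) (ne_of_lt hlt) }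
  exact my_length_le_krullDim q

theorem sober_exists_closed_point_localDim_eq_dim (X : Type*) [TopologicalSpace X]
    [QuasiSober X] [T0Space X] (d : ℕ)
    (hd : topologicalKrullDim X = (d : WithBot ℕ∞)) :
    ∃ x : X, IsClosed ({x} : Set X) ∧
      (∀ U : Set X, IsOpen U → x ∈ U → (d : WithBot ℕ∞) ≤ topologicalKrullDim ↥U) ∧
      localDim X x = (d : WithBot ℕ∞) := by
  -- the poset of irreducible closeds is nonempty
  have hne : Nonempty (IrreducibleCloseds X) := by
    by_contra h
    rw [not_nonempty_iff] at h
    rw [topologicalKrullDim, krullDim_eq_bot_iff.mpr h] at hd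
    exact absurd hd.symm (by simp)
  -- every series has length ≤ d
  have hlen_le : ∀ p : LTSeries (IrreducibleCloseds X), p.length ≤ d := by
    intro p
    have := my_length_le_krullDim p
    rw [← topologicalKrullDim, hd] at this
    exact_mod_cast this
  -- get a series of length exactly d
  obtain ⟨p, hp⟩ : ∃ p : LTSeries (IrreducibleCloseds X), p.length = d := by
    rcases Nat.eq_zero_or_pos d with h0 | hpos
    · exact ⟨RelSeries.singleton _ (Classical.arbitrary _), h0 ▸ rfl⟩
    · have hsup : (⨆ p : LTSeries (IrreducibleCloseds X), (p.length : ℕ∞)) = (d : ℕ∞) := by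
        have := (krullDim_eq_iSup_length (α := IrreducibleCloseds X)).symm.trans hd
        exact_mod_cast this
      have hlt : ((d - 1 : ℕ) : ℕ∞) < ⨆ p : LTSeries (IrreducibleCloseds X), (p.length : ℕ∞) := by
        rw [hsup]; exact_mod_cast Nat.sub_lt hpos one_pos
      obtain ⟨p, hp⟩ := lt_iSup_iff.mp hlt
      have : d - 1 < p.length := by exact_mod_cast hp
      exact ⟨p, le_antisymm (hlen_le p) (by omega)⟩
  -- the generic point of the head of the series
  set Z := p.head with hZ
  have hZirr : IsIrreducible (Z : Set X) := Z.isIrreducible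
  set x := hZirr.genericPoint with hx
  have hgen : closure ({x} : Set X) = (Z : Set X) :=
    hZirr.isGenericPoint_genericPoint Z.isClosed
  have hxZ : x ∈ (Z : Set X) := hgen ▸ subset_closure rfl
  -- x is a closed point
  have hsingle : (Z : Set X) = {x} := by
    apply subset_antisymm
    · intro y hy
      by_contra hy'
      -- closure {y} is an irreducible closed strictly inside Z
      have hsub : closure ({y} : Set X) ⊆ (Z : Set X) :=
        Z.isClosed.closure_subset_iff.mpr (Set.singleton_subset_iff.mpr hy)
      have hne' : closure ({y} : Set X) ≠ (Z : Set X) := by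
        intro hcl
        exact hy' (inseparable_iff_closure_eq.mpr (hcl.trans hgen.symm)).eq
      set W : IrreducibleCloseds X :=
        ⟨closure {y}, (isIrreducible_singleton (x := y)).closure, isClosed_closure⟩
      have hWlt : W < Z := lt_of_le_of_ne hsub (fun h => hne' (congrArg (fun W : IrreducibleCloseds X => (W : Set X)) h))
      have := hlen_le (p.cons W hWlt)
      simp [hp] at this
    · exact Set.singleton_subset_iff.mpr hxZ
  have hclosed : IsClosed ({x} : Set X) := by
    rw [← hsingle]; exact Z.isClosed
  -- the lower bound on dimensions of open neighbourhoods
  have hbound : ∀ U : Set X, IsOpen U → x ∈ U → (d : WithBot ℕ∞) ≤ topologicalKrullDim ↥U := by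
    intro U hU hxU
    have := le_dim_open hU p hxU hxZ
    rwa [hp] at this
  refine ⟨x, hclosed, hbound, le_antisymm ?_ (le_iInf fun U => hbound U.1 U.2.1 U.2.2)⟩
  have huniv : topologicalKrullDim ↥(Set.univ : Set X) = (d : WithBot ℕ∞) := by
    rw [← hd]
    exact IsHomeomorph.topologicalKrullDim_eq _ (Homeomorph.Set.univ X).isHomeomorph
  calc localDim X x ≤ topologicalKrullDim ↥(Set.univ : Set X) :=
        iInf_le (fun U : {U : Set X // IsOpen U ∧ x ∈ U} => topologicalKrullDim ↥U.1)
          ⟨Set.univ, isOpen_univ, Set.mem_univ x⟩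
    _ = (d : WithBot ℕ∞) := huniv
end

section
/- Let X be an irreducible, equicodimensional, finite-dimensional topological space. Then the following are equivalent: (1) X is catenary; (2) for all irreducible closed subsets Y ⊆ Z of X, dim Y + codim(Y, Z) = dim Z; (3) all maximal chains of irreducible closed subsets of X have the same length. -/
open TopologicalSpace Order
/-- A chain of irreducible closed subsets is saturated (maximal with given endpoints)
if each step is a covering relation. -/
def IsSaturatedChain {X : Type*} [TopologicalSpace X]
    (p : LTSeries (IrreducibleCloseds X)) : Prop :=
  ∀ i : Fin p.length, p.toFun i.castSucc ⋖ p.toFun i.succ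

/-- A topological space is catenary if any two saturated chains of irreducible closed
subsets with the same endpoints have the same length. -/
def IsCatenarySpace (X : Type*) [TopologicalSpace X] : Prop :=
  ∀ p q : LTSeries (IrreducibleCloseds X), p.head = q.head → p.last = q.last →
    IsSaturatedChain p → IsSaturatedChain q → p.length = q.length

/-- A maximal chain of irreducible closed subsets: saturated, starting at a minimal
irreducible closed subset and ending at a maximal one. -/
def IsMaximalChain {X : Type*} [TopologicalSpace X]
    (p : LTSeries (IrreducibleCloseds X)) : Prop :=
  IsSaturatedChain p ∧ IsMin p.head ∧ IsMax p.last

/-- The codimension `codim(Y, Z)`: the supremum of lengths of chains of irreducible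
closed subsets from `Y` to `Z`. -/
noncomputable def relCodim {X : Type*} [TopologicalSpace X]
    (Y Z : IrreducibleCloseds X) : ℕ∞ :=
  ⨆ p : {p : LTSeries (IrreducibleCloseds X) // p.head = Y ∧ p.last = Z},
    (p.1.length : ℕ∞)

/-- The dimension of the irreducible closed subset `Y`: the supremum of lengths of
chains of irreducible closed subsets contained in `Y`. -/
noncomputable def chainDim {X : Type*} [TopologicalSpace X]
    (Y : IrreducibleCloseds X) : ℕ∞ :=
  ⨆ p : {p : LTSeries (IrreducibleCloseds X) // p.last ≤ Y}, (p.1.length : ℕ∞)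

/-- The dimension of `X`: the supremum of lengths of chains of irreducible closed
subsets of `X`. -/
noncomputable def spaceDim (X : Type*) [TopologicalSpace X] : ℕ∞ :=
  ⨆ p : LTSeries (IrreducibleCloseds X), (p.length : ℕ∞)

/-- The codimension of `Y` in the ambient space: the supremum of lengths of chains of
irreducible closed subsets starting at `Y`. -/
noncomputable def codimAbove {X : Type*} [TopologicalSpace X]
    (Y : IrreducibleCloseds X) : ℕ∞ :=
  ⨆ p : {p : LTSeries (IrreducibleCloseds X) // p.head = Y}, (p.1.length : ℕ∞)

/-- A topological space is equicodimensional if all minimal irreducible closed subsets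
have the same codimension. -/
def IsEquicodim (X : Type*) [TopologicalSpace X] : Prop :=
  ∀ Y Y' : IrreducibleCloseds X, IsMin Y → IsMin Y' → codimAbove Y = codimAbove Y'

section AuxGeneral
variable {α : Type*} [PartialOrder α]

private lemma auxExistsMax {S : Set (LTSeries α)} (hne : S.Nonempty) {n : ℕ}
    (hbd : ∀ p ∈ S, p.length ≤ n) : ∃ p ∈ S, ∀ q ∈ S, q.length ≤ p.length := by
  classical
  have hLne : (RelSeries.length '' S).Nonempty := hne.image _
  have hLbd : BddAbove (RelSeries.length '' S) := ⟨n, by rintro _ ⟨p, hp, rfl⟩; exact hbd p hp⟩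
  obtain ⟨p, hp, hlen⟩ := Nat.sSup_mem hLne hLbd
  exact ⟨p, hp, fun q hq => hlen ▸ le_csSup hLbd ⟨q, hq, rfl⟩⟩

private lemma auxInsert {p : LTSeries α} {i : Fin p.length} {a : α}
    (h1 : p.toFun i.castSucc < a) (h2 : a < p.toFun i.succ) :
    ∃ q : LTSeries α, q.head = p.head ∧ q.last = p.last ∧ q.length = p.length + 1 := by
  refine ⟨((p.take i.castSucc).snoc a (by rwa [RelSeries.last_take])).append
      (p.drop i.succ) (by rw [RelSeries.last_snoc, RelSeries.head_drop]; exact h2), ?_, ?_, ?_⟩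
  · rw [RelSeries.head_append, RelSeries.head_snoc, RelSeries.head_take]
  · rw [RelSeries.last_append, RelSeries.last_drop]
  · simp only [RelSeries.append_length, RelSeries.snoc_length, RelSeries.take_length,
      RelSeries.drop_length, Fin.coe_castSucc, Fin.val_succ]
    have := i.2
    omega

private lemma auxSatOfMax {p : LTSeries α}
    (hmax : ∀ q : LTSeries α, q.head = p.head → q.last = p.last → q.length ≤ p.length) :
    ∀ i : Fin p.length, p.toFun i.castSucc ⋖ p.toFun i.succ := by
  intro i
  refine ⟨p.step i, fun a h1 h2 => ?_⟩
  obtain ⟨q, hh, hl, hlen⟩ := auxInsert h1 h2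
  have := hmax q hh hl
  omega

private lemma auxSatSmash {p q : LTSeries α} (hpq : p.last = q.head)
    (hp : ∀ i : Fin p.length, p.toFun i.castSucc ⋖ p.toFun i.succ)
    (hq : ∀ i : Fin q.length, q.toFun i.castSucc ⋖ q.toFun i.succ) :
    ∀ i : Fin (p.smash q hpq).length,
      (p.smash q hpq).toFun i.castSucc ⋖ (p.smash q hpq).toFun i.succ := by
  intro i
  by_cases h : i.1 < p.length
  · rw [show i = Fin.castAdd q.length ⟨i.1, h⟩ from Fin.ext rfl]
    rw [show (p.smash q hpq).toFun = ⇑(p.smash q hpq) from rfl]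
    erw [RelSeries.smash_castAdd hpq ⟨i.1, h⟩, RelSeries.smash_succ_castAdd hpq ⟨i.1, h⟩]
    exact hp ⟨i.1, h⟩
  · have hi := i.2
    have h' : i.1 - p.length < q.length := by
      simp only [RelSeries.smash_length] at hi; omega
    rw [show i = Fin.natAdd p.length ⟨i.1 - p.length, h'⟩ from Fin.ext (by simp; omega)]
    rw [show (p.smash q hpq).toFun = ⇑(p.smash q hpq) from rfl]
    erw [RelSeries.smash_natAdd hpq ⟨i.1 - p.length, h'⟩,
      RelSeries.smash_succ_natAdd hpq ⟨i.1 - p.length, h'⟩]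
    exact hq _

private lemma auxSatEraseLast {p : LTSeries α}
    (hp : ∀ i : Fin p.length, p.toFun i.castSucc ⋖ p.toFun i.succ) :
    ∀ i : Fin p.eraseLast.length, p.eraseLast.toFun i.castSucc ⋖ p.eraseLast.toFun i.succ := by
  intro i
  have h : i.1 < p.length := by
    have := i.2
    simp only [RelSeries.eraseLast_length] at this
    omega
  exact hp ⟨i.1, h⟩

private lemma auxEraseLastCovBy {p : LTSeries α} (h0 : p.length ≠ 0)
    (hp : ∀ i : Fin p.length, p.toFun i.castSucc ⋖ p.toFun i.succ) :
    p.eraseLast.last ⋖ p.last := by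
  have e : p.last = p.toFun (Fin.succ ⟨p.length - 1, by omega⟩) := by
    show p.toFun (Fin.last p.length) = _
    congr 1
    ext
    simp [Fin.last]
    omega
  rw [e]
  exact hp ⟨p.length - 1, by omega⟩

private lemma auxHeadEqLast {p : LTSeries α} (h0 : p.length = 0) : p.head = p.last := by
  show p.toFun 0 = p.toFun (Fin.last p.length)
  congr 1
  ext
  simp [Fin.last, h0]

private lemma auxISup {ι : Sort*} (f : ι → ℕ) (i₀ : ι) (h : ∀ i, f i ≤ f i₀) :
    ⨆ i, (f i : ℕ∞) = (f i₀ : ℕ∞) :=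
  le_antisymm (iSup_le fun i => Nat.cast_le.mpr (h i)) (le_iSup (fun i => (f i : ℕ∞)) i₀)

end AuxGeneral

section AuxSpace
variable {X : Type*} [TopologicalSpace X] {n : ℕ}

private lemma auxBound (hfin : spaceDim X ≠ ⊤) :
    ∃ n : ℕ, ∀ p : LTSeries (IrreducibleCloseds X), p.length ≤ n := by
  obtain ⟨n, hn⟩ := WithTop.ne_top_iff_exists.mp hfin
  refine ⟨n, fun p => ?_⟩
  have h : (p.length : ℕ∞) ≤ spaceDim X :=
    le_iSup (fun p : LTSeries (IrreducibleCloseds X) => (p.length : ℕ∞)) p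
  rw [← hn] at h
  exact Nat.cast_le.mp h

private lemma le_chainDim {Y : IrreducibleCloseds X} (q : LTSeries (IrreducibleCloseds X))
    (h : q.last ≤ Y) : (q.length : ℕ∞) ≤ chainDim Y :=
  le_iSup (fun s : {p : LTSeries (IrreducibleCloseds X) // p.last ≤ Y} => (s.1.length : ℕ∞)) ⟨q, h⟩

private lemma le_relCodim {Y Z : IrreducibleCloseds X} (q : LTSeries (IrreducibleCloseds X))
    (h : q.head = Y ∧ q.last = Z) : (q.length : ℕ∞) ≤ relCodim Y Z :=
  le_iSup (fun s : {p : LTSeries (IrreducibleCloseds X) // p.head = Y ∧ p.last = Z} =>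
    (s.1.length : ℕ∞)) ⟨q, h⟩

private lemma le_codimAbove {Y : IrreducibleCloseds X} (q : LTSeries (IrreducibleCloseds X))
    (h : q.head = Y) : (q.length : ℕ∞) ≤ codimAbove Y :=
  le_iSup (fun s : {p : LTSeries (IrreducibleCloseds X) // p.head = Y} => (s.1.length : ℕ∞)) ⟨q, h⟩

private lemma auxExistsChainDim (hbd : ∀ p : LTSeries (IrreducibleCloseds X), p.length ≤ n)
    (Y : IrreducibleCloseds X) :
    ∃ p : LTSeries (IrreducibleCloseds X), p.last = Y ∧ IsMin p.head ∧ IsSaturatedChain p ∧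
      chainDim Y = p.length := by
  obtain ⟨p, hp, hmax⟩ := auxExistsMax (S := {p : LTSeries (IrreducibleCloseds X) | p.last ≤ Y})
    ⟨RelSeries.singleton _ Y, by simp [RelSeries.last_singleton]⟩ (fun p _ => hbd p)
  have hlast : p.last = Y := by
    by_contra hne
    have hlt : p.last < Y := lt_of_le_of_ne hp hne
    have h1 := hmax (p.snoc Y hlt) (by simp)
    simp only [RelSeries.snoc_length] at h1
    omega
  have hmin : IsMin p.head := by
    intro b hb
    by_contra hnb
    have hlt : b < p.head := lt_of_le_not_ge hb hnb
    have h1 := hmax (p.cons b hlt) (by simp only [Set.mem_setOf_eq, RelSeries.last_cons]; exact hp)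
    simp only [RelSeries.cons_length] at h1
    omega
  refine ⟨p, hlast, hmin, auxSatOfMax (fun q hh hl => hmax q (by rw [Set.mem_setOf_eq, hl, hlast])),
    ?_⟩
  exact auxISup (ι := {p : LTSeries (IrreducibleCloseds X) // p.last ≤ Y})
    (fun s => s.1.length) ⟨p, hp⟩ (fun s => hmax s.1 s.2)

private lemma auxExistsCodimAbove (hbd : ∀ p : LTSeries (IrreducibleCloseds X), p.length ≤ n)
    (Y : IrreducibleCloseds X) :
    ∃ p : LTSeries (IrreducibleCloseds X), p.head = Y ∧ IsMax p.last ∧ IsSaturatedChain p ∧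
      codimAbove Y = p.length := by
  obtain ⟨p, hp, hmax⟩ := auxExistsMax (S := {p : LTSeries (IrreducibleCloseds X) | p.head = Y})
    ⟨RelSeries.singleton _ Y, by simp [RelSeries.head_singleton]⟩ (fun p _ => hbd p)
  have hmx : IsMax p.last := by
    intro b hb
    by_contra hnb
    have hlt : p.last < b := lt_of_le_not_ge hb hnb
    have h1 := hmax (p.snoc b hlt) (by simp only [Set.mem_setOf_eq, RelSeries.head_snoc]; exact hp)
    simp only [RelSeries.snoc_length] at h1
    omega
  refine ⟨p, hp, hmx, auxSatOfMax (fun q hh hl => hmax q (by rw [Set.mem_setOf_eq, hh, hp])), ?_⟩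
  exact auxISup (ι := {p : LTSeries (IrreducibleCloseds X) // p.head = Y})
    (fun s => s.1.length) ⟨p, hp⟩ (fun s => hmax s.1 s.2)

private lemma auxExistsRelCodim (hbd : ∀ p : LTSeries (IrreducibleCloseds X), p.length ≤ n)
    {Y Z : IrreducibleCloseds X} (h : Y ≤ Z) :
    ∃ p : LTSeries (IrreducibleCloseds X), p.head = Y ∧ p.last = Z ∧ IsSaturatedChain p ∧
      relCodim Y Z = p.length := by
  have hne : {p : LTSeries (IrreducibleCloseds X) | p.head = Y ∧ p.last = Z}.Nonempty := by
    rcases eq_or_lt_of_le h with rfl | hlt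
    · exact ⟨RelSeries.singleton _ Y, by simp [RelSeries.head_singleton, RelSeries.last_singleton]⟩
    · refine ⟨(RelSeries.singleton _ Z).cons Y (by simpa [RelSeries.head_singleton] using hlt), ?_⟩
      constructor
      · simp
      · simp [RelSeries.last_singleton]
  obtain ⟨p, hp, hmax⟩ := auxExistsMax hne (fun p _ => hbd p)
  refine ⟨p, hp.1, hp.2, auxSatOfMax (fun q hh hl =>
    hmax q ⟨by rw [hh, hp.1], by rw [hl, hp.2]⟩), ?_⟩
  exact auxISup (ι := {p : LTSeries (IrreducibleCloseds X) // p.head = Y ∧ p.last = Z})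
    (fun s => s.1.length) ⟨p, hp⟩ (fun s => hmax s.1 s.2)

end AuxSpace

theorem catenary_tfae_of_equicodim (X : Type*) [TopologicalSpace X] [IrreducibleSpace X]
    (heq : IsEquicodim X) (hfin : spaceDim X ≠ ⊤) :
    (IsCatenarySpace X ↔
      (∀ Y Z : IrreducibleCloseds X, Y ≤ Z → chainDim Y + relCodim Y Z = chainDim Z)) ∧
    ((∀ Y Z : IrreducibleCloseds X, Y ≤ Z → chainDim Y + relCodim Y Z = chainDim Z) ↔
      (∀ p q : LTSeries (IrreducibleCloseds X),
        IsMaximalChain p → IsMaximalChain q → p.length = q.length)) := by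
  obtain ⟨n, hbd⟩ := auxBound hfin
  set T : IrreducibleCloseds X :=
    ⟨Set.univ, IrreducibleSpace.isIrreducible_univ X, isClosed_univ⟩ with hTdef
  have hT : ∀ Y : IrreducibleCloseds X, Y ≤ T :=
    fun Y => SetLike.coe_subset_coe.mp (Set.subset_univ _)
  have hmaxT : ∀ {M : IrreducibleCloseds X}, IsMax M → M = T :=
    fun {M} hM => le_antisymm (hT M) (hM (hT M))
  -- relCodim of a covering pair is 1
  have hcov1 : ∀ Y Z : IrreducibleCloseds X, Y ⋖ Z → relCodim Y Z = 1 := by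
    intro Y Z h
    obtain ⟨p, hp1, hp2, _, hplen⟩ := auxExistsRelCodim hbd h.le
    rw [hplen]
    have h0 : p.length ≠ 0 := by
      intro e
      exact h.lt.ne (hp1 ▸ hp2 ▸ auxHeadEqLast e)
    have h2 : p.length < 2 := by
      by_contra hge
      push_neg at hge
      have hc1 : Y < p.toFun ⟨1, by omega⟩ := by
        rw [← hp1]
        exact p.strictMono (show (0 : Fin (p.length + 1)) < ⟨1, by omega⟩ by
          simp [Fin.lt_def])
      have hc2 : p.toFun ⟨1, by omega⟩ < Z := by
        rw [← hp2]
        exact p.strictMono (show (⟨1, by omega⟩ : Fin (p.length + 1)) < Fin.last p.length by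
          simp [Fin.lt_def, Fin.last]; omega)
      exact h.2 hc1 hc2
    have he : p.length = 1 := by omega
    rw [he, Nat.cast_one]
  -- catenary implies additivity of relCodim
  have addOf : IsCatenarySpace X → ∀ A B C : IrreducibleCloseds X, A ≤ B → B ≤ C →
      relCodim A B + relCodim B C = relCodim A C := by
    intro hcat A B C h1 h2
    obtain ⟨a, ha1, ha2, hasat, halen⟩ := auxExistsRelCodim hbd h1
    obtain ⟨b, hb1, hb2, hbsat, hblen⟩ := auxExistsRelCodim hbd h2
    obtain ⟨c, hc1, hc2, hcsat, hclen⟩ := auxExistsRelCodim hbd (h1.trans h2)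
    have hab : a.last = b.head := by rw [ha2, hb1]
    have hlen := hcat (a.smash b hab) c
      (by rw [RelSeries.head_smash]; rw [ha1, hc1])
      (by rw [RelSeries.last_smash]; rw [hb2, hc2])
      (auxSatSmash hab hasat hbsat) hcsat
    rw [RelSeries.smash_length] at hlen
    rw [halen, hblen, hclen, ← Nat.cast_add, hlen]
  -- codimAbove equals relCodim to the top
  have hcodimT : ∀ W : IrreducibleCloseds X, codimAbove W = relCodim W T := by
    intro W
    obtain ⟨p, hph, hpl, _, hplen⟩ := auxExistsCodimAbove hbd W
    refine le_antisymm ?_ ?_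
    · obtain ⟨q, hq1, hq2, _, hqlen⟩ := auxExistsCodimAbove hbd W
      rw [hplen]
      exact le_relCodim p ⟨hph, hmaxT hpl⟩
    · obtain ⟨q, hq1, hq2, _, hqlen⟩ := auxExistsRelCodim hbd (hT W)
      rw [hqlen]
      exact le_codimAbove q hq1
  -- chainDim of a minimal element is 0
  have chainDim_min : ∀ m : IrreducibleCloseds X, IsMin m → chainDim m = 0 := by
    intro m hm
    have hz : ∀ q : LTSeries (IrreducibleCloseds X), q.last ≤ m → q.length = 0 := by
      intro q hq
      by_contra h0
      have h1 : q.head < q.last :=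
        q.strictMono (show (0 : Fin (q.length + 1)) < Fin.last q.length by
          simp [Fin.lt_def, Fin.last]; omega)
      have h2 : q.head < m := lt_of_lt_of_le h1 hq
      exact h2.not_ge (hm h2.le)
    have hs := auxISup (ι := {p : LTSeries (IrreducibleCloseds X) // p.last ≤ m})
      (fun s => s.1.length) ⟨RelSeries.singleton _ m, by simp [RelSeries.last_singleton]⟩
      (fun s => by show s.1.length ≤ _; rw [hz s.1 s.2]; exact Nat.zero_le _)
    unfold chainDim
    rw [hs]
    simp
  -- chainDim via a maximal-length chain
  have chainDim_eq : ∀ (Y : IrreducibleCloseds X) (p : LTSeries (IrreducibleCloseds X)),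
      p.last = Y → chainDim Y = p.length → chainDim Y = relCodim p.head Y := by
    intro Y p hlast hdim
    refine le_antisymm ?_ ?_
    · rw [hdim]
      exact le_relCodim p ⟨rfl, hlast⟩
    · obtain ⟨q, hq1, hq2, _, hqlen⟩ := auxExistsRelCodim hbd
        (show p.head ≤ Y from hlast ▸ p.head_le_last)
      rw [hqlen]
      exact le_chainDim q (le_of_eq hq2)
  -- the dimension formula implies: covering steps increase chainDim by one
  have hcovOf : (∀ Y Z : IrreducibleCloseds X, Y ≤ Z → chainDim Y + relCodim Y Z = chainDim Z) →
      ∀ Y Z : IrreducibleCloseds X, Y ⋖ Z → chainDim Z = chainDim Y + 1 := by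
    intro hdim Y Z h
    rw [← hdim Y Z h.le, hcov1 Y Z h]
  -- length of a saturated chain computes chainDim of its endpoints
  have hsatlenOf : (∀ Y Z : IrreducibleCloseds X, Y ⋖ Z → chainDim Z = chainDim Y + 1) →
      ∀ (m : ℕ) (p : LTSeries (IrreducibleCloseds X)), p.length = m → IsSaturatedChain p →
      chainDim p.last = chainDim p.head + p.length := by
    intro hcov m
    induction m with
    | zero =>
      intro p hlen _
      rw [hlen, Nat.cast_zero, add_zero, auxHeadEqLast hlen]
    | succ k ih =>
      intro p hlen hsat
      have h0 : p.length ≠ 0 := by omega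
      have hel : p.eraseLast.length = k := by
        simp only [RelSeries.eraseLast_length]
        omega
      have hE := ih p.eraseLast hel (auxSatEraseLast hsat)
      have hc := hcov _ _ (auxEraseLastCovBy h0 hsat)
      rw [hc, hE, RelSeries.head_eraseLast, hel, hlen]
      push_cast
      ring
  constructor
  · constructor
    · -- catenary → dimension formula
      intro hcat Y Z hYZ
      obtain ⟨pY, hpYl, hpYmin, _, hpYd⟩ := auxExistsChainDim hbd Y
      obtain ⟨pZ, hpZl, hpZmin, _, hpZd⟩ := auxExistsChainDim hbd Z
      have hY1 : chainDim Y = relCodim pY.head Y := chainDim_eq Y pY hpYl hpYd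
      have hZ1 : chainDim Z = relCodim pZ.head Z := chainDim_eq Z pZ hpZl hpZd
      have hmYY : pY.head ≤ Y := hpYl ▸ pY.head_le_last
      have hmZZ : pZ.head ≤ Z := hpZl ▸ pZ.head_le_last
      have E1 : chainDim Y + relCodim Y Z + relCodim Z T = chainDim Z + relCodim Z T := by
        rw [hY1, hZ1, add_assoc, addOf hcat Y Z T hYZ (hT Z),
          addOf hcat pY.head Y T hmYY (hT Y), addOf hcat pZ.head Z T hmZZ (hT Z),
          ← hcodimT pY.head, ← hcodimT pZ.head]
        exact heq _ _ hpYmin hpZmin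
      obtain ⟨d, _, _, _, hdlen⟩ := auxExistsRelCodim hbd hYZ
      obtain ⟨r, _, _, _, hrlen⟩ := auxExistsRelCodim hbd (hT Z)
      rw [hpYd, hdlen, hpZd, hrlen] at E1
      rw [hpYd, hdlen, hpZd]
      have E2 : pY.length + d.length + r.length = pZ.length + r.length := by exact_mod_cast E1
      have E3 : pY.length + d.length = pZ.length := by omega
      exact_mod_cast E3
    · -- dimension formula → catenary
      intro hdim p q hh hl hsp hsq
      have h1 := hsatlenOf (hcovOf hdim) p.length p rfl hsp
      have h2 := hsatlenOf (hcovOf hdim) q.length q rfl hsq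
      rw [hh, hl] at h1
      obtain ⟨c, _, _, _, hc⟩ := auxExistsChainDim hbd q.head
      obtain ⟨e, _, _, _, he⟩ := auxExistsChainDim hbd q.last
      rw [hc, he] at h1 h2
      have E1 : e.length = c.length + p.length := by exact_mod_cast h1
      have E2 : e.length = c.length + q.length := by exact_mod_cast h2
      omega
  · constructor
    · -- dimension formula → all maximal chains have the same length
      intro hdim p q hp hq
      obtain ⟨hpsat, hpmin, hpmax⟩ := hp
      obtain ⟨hqsat, hqmin, hqmax⟩ := hq
      have h1 := hsatlenOf (hcovOf hdim) p.length p rfl hpsat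
      have h2 := hsatlenOf (hcovOf hdim) q.length q rfl hqsat
      rw [chainDim_min _ hpmin, zero_add, hmaxT hpmax] at h1
      rw [chainDim_min _ hqmin, zero_add, hmaxT hqmax] at h2
      exact_mod_cast h1.symm.trans h2
    · -- all maximal chains of the same length → dimension formula
      intro h3 Y Z hYZ
      obtain ⟨a, haY, hamin, hasat, halen⟩ := auxExistsChainDim hbd Y
      obtain ⟨b, hbY, hbZ, hbsat, hblen⟩ := auxExistsRelCodim hbd hYZ
      obtain ⟨c, hcZ, hcmax, hcsat, hclen⟩ := auxExistsCodimAbove hbd Z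
      obtain ⟨a', haZ', hamin', hasat', halen'⟩ := auxExistsChainDim hbd Z
      have e1 : a.last = b.head := by rw [haY, hbY]
      have e2 : (a.smash b e1).last = c.head := by rw [RelSeries.last_smash, hbZ, hcZ]
      have e3 : a'.last = c.head := by rw [haZ', hcZ]
      have h := h3 ((a.smash b e1).smash c e2) (a'.smash c e3)
        ⟨auxSatSmash e2 (auxSatSmash e1 hasat hbsat) hcsat,
         by rw [show ((a.smash b e1).smash c e2).head = a.head by
              rw [RelSeries.head_smash, RelSeries.head_smash]]; exact hamin,
         by rw [RelSeries.last_smash]; exact hcmax⟩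
        ⟨auxSatSmash e3 hasat' hcsat,
         by rw [RelSeries.head_smash]; exact hamin',
         by rw [RelSeries.last_smash]; exact hcmax⟩
      rw [RelSeries.smash_length, RelSeries.smash_length, RelSeries.smash_length] at h
      rw [halen, hblen, halen', ← Nat.cast_add]
      congr 1
      omega
end

section
/- Let X be an irreducible, equicodimensional, finite-dimensional topological space satisfying the equivalent catenary conditions (all maximal chains of irreducible closed subsets have the same length). Then every irreducible closed subset Y of X is also equicodimensional, with codim(Y_0, Y) = dim Y for every minimal irreducible closed subset Y_0 of Y. -/
open TopologicalSpace Order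
section AuxEquicodim

private lemma head_insertNth' {α : Type*} {r : SetRel α α} (p : RelSeries r) (i : Fin p.length)
    (a : α) (h1 : (p i.castSucc, a) ∈ r) (h2 : (a, p i.succ) ∈ r) :
    (p.insertNth i a h1 h2).head = p.head := by
  rw [show (p.insertNth i a h1 h2).head = (p.insertNth i a h1 h2).toFun (0 : Fin (p.length + 1 + 1)) from rfl,
    RelSeries.insertNth_toFun, Fin.insertNth_apply_below (by simp [Fin.lt_def])]
  simp only [eq_rec_constant]; rfl

private lemma last_insertNth' {α : Type*} {r : SetRel α α} (p : RelSeries r) (i : Fin p.length)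
    (a : α) (h1 : (p i.castSucc, a) ∈ r) (h2 : (a, p i.succ) ∈ r) :
    (p.insertNth i a h1 h2).last = p.last := by
  rw [show (p.insertNth i a h1 h2).last
      = (p.insertNth i a h1 h2).toFun (Fin.last (p.length + 1)) from rfl,
    RelSeries.insertNth_toFun, Fin.insertNth_apply_above (by simp [Fin.lt_def])]
  simp only [eq_rec_constant]
  show p.toFun _ = p.toFun (Fin.last p.length)
  congr 1

variable {X : Type*} [TopologicalSpace X]

private lemma exists_maximizer' (hfin : spaceDim X ≠ ⊤)
    (P : LTSeries (IrreducibleCloseds X) → Prop) (hne : ∃ p, P p) :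
    ∃ p, P p ∧ ∀ q, P q → q.length ≤ p.length := by
  have hb : ∀ p : LTSeries (IrreducibleCloseds X), p.length ≤ (spaceDim X).toNat := by
    intro p
    have h : (p.length : ℕ∞) ≤ spaceDim X :=
      le_iSup (fun p : LTSeries (IrreducibleCloseds X) => (p.length : ℕ∞)) p
    rw [← ENat.coe_toNat hfin] at h
    exact_mod_cast h
  have hSne : {m | ∃ p, P p ∧ p.length = m}.Nonempty := by
    obtain ⟨p, hp⟩ := hne
    exact ⟨p.length, p, hp, rfl⟩
  have hSbdd : BddAbove {m | ∃ p, P p ∧ p.length = m} := by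
    refine ⟨(spaceDim X).toNat, fun m hm => ?_⟩
    obtain ⟨p, -, rfl⟩ := hm
    exact hb p
  obtain ⟨p, hp, hpl⟩ := Nat.sSup_mem hSne hSbdd
  exact ⟨p, hp, fun q hq => by rw [hpl]; exact le_csSup hSbdd ⟨q, hq, rfl⟩⟩

private lemma sat_of_max' {p : LTSeries (IrreducibleCloseds X)}
    (h : ∀ q : LTSeries (IrreducibleCloseds X),
        q.head = p.head → q.last = p.last → q.length ≤ p.length) :
    IsSaturatedChain p := by
  intro i
  refine ⟨p.step i, fun c hc1 hc2 => ?_⟩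
  have hq := h (p.insertNth i c hc1 hc2) (head_insertNth' p i c hc1 hc2)
    (last_insertNth' p i c hc1 hc2)
  rw [RelSeries.insertNth_length] at hq
  exact Nat.not_succ_le_self _ hq

private lemma min_head_of_max' {p : LTSeries (IrreducibleCloseds X)}
    (h : ∀ q : LTSeries (IrreducibleCloseds X), q.last = p.last → q.length ≤ p.length) :
    IsMin p.head := by
  intro M hM
  by_contra hc
  have hlt : M < p.head := lt_of_le_not_ge hM hc
  have hq := h (p.cons M hlt) (RelSeries.last_cons p M hlt)
  simp [RelSeries.cons_length] at hq

private lemma max_last_of_max' {p : LTSeries (IrreducibleCloseds X)}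
    (h : ∀ q : LTSeries (IrreducibleCloseds X), q.head = p.head → q.length ≤ p.length) :
    IsMax p.last := by
  intro M hM
  by_contra hc
  have hlt : p.last < M := lt_of_le_not_ge hM hc
  have hq := h (p.snoc M hlt) (RelSeries.head_snoc p M hlt)
  simp [RelSeries.snoc_length] at hq

private lemma smash_sat' {p q : LTSeries (IrreducibleCloseds X)} (h : p.last = q.head)
    (hp : IsSaturatedChain p) (hq : IsSaturatedChain q) :
    IsSaturatedChain (p.smash q h) := by
  intro i
  by_cases hi : (i : ℕ) < p.length
  · have e1 : (p.smash q h).toFun i.castSucc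
        = p.toFun (Fin.castSucc (⟨(i : ℕ), hi⟩ : Fin p.length)) := by
      exact RelSeries.smash_castAdd h (⟨(i : ℕ), hi⟩ : Fin p.length)
    have e2 : (p.smash q h).toFun i.succ
        = p.toFun (Fin.succ (⟨(i : ℕ), hi⟩ : Fin p.length)) := by
      exact RelSeries.smash_succ_castAdd h (⟨(i : ℕ), hi⟩ : Fin p.length)
    rw [e1, e2]
    exact hp ⟨(i : ℕ), hi⟩
  · have hi2 : (i : ℕ) - p.length < q.length := by
      have := i.2
      simp only [RelSeries.smash_length] at this
      omega
    have e1 : (p.smash q h).toFun i.castSucc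
        = q.toFun (Fin.castSucc (⟨(i : ℕ) - p.length, hi2⟩ : Fin q.length)) := by
      have := RelSeries.smash_natAdd h (⟨(i : ℕ) - p.length, hi2⟩ : Fin q.length)
      convert this using 2
      congr 1
      ext
      simp only [Fin.coe_castSucc, Fin.coe_natAdd]
      omega
    have e2 : (p.smash q h).toFun i.succ
        = q.toFun (Fin.succ (⟨(i : ℕ) - p.length, hi2⟩ : Fin q.length)) := by
      have := RelSeries.smash_succ_natAdd h (⟨(i : ℕ) - p.length, hi2⟩ : Fin q.length)
      convert this using 2
      congr 1
      ext
      simp only [Fin.val_succ, Fin.coe_natAdd]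
      omega
    rw [e1, e2]
    exact hq ⟨(i : ℕ) - p.length, hi2⟩

private lemma key_len' (hfin : spaceDim X ≠ ⊤)
    (hmax : ∀ p q : LTSeries (IrreducibleCloseds X),
      IsMaximalChain p → IsMaximalChain q → p.length = q.length)
    {Y : IrreducibleCloseds X} {s s' : LTSeries (IrreducibleCloseds X)}
    (hs : IsSaturatedChain s) (hsh : IsMin s.head) (hsl : s.last = Y)
    (hs' : IsSaturatedChain s') (hsh' : IsMin s'.head) (hsl' : s'.last = Y) :
    s.length = s'.length := by
  obtain ⟨r, hrh, hrmax⟩ := exists_maximizer' hfin (fun p => p.head = Y)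
    ⟨RelSeries.singleton _ Y, RelSeries.head_singleton Y⟩
  have hrsat : IsSaturatedChain r := sat_of_max' (fun q hq _ => hrmax q (hq.trans hrh))
  have hrlast : IsMax r.last := max_last_of_max' (fun q hq => hrmax q (hq.trans hrh))
  have h1 : s.last = r.head := hsl.trans hrh.symm
  have h2 : s'.last = r.head := hsl'.trans hrh.symm
  have e := hmax (s.smash r h1) (s'.smash r h2)
    ⟨smash_sat' h1 hs hrsat, by simpa using hsh, by simpa using hrlast⟩
    ⟨smash_sat' h2 hs' hrsat, by simpa using hsh', by simpa using hrlast⟩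
  simp only [RelSeries.smash_length] at e
  omega

end AuxEquicodim

theorem equicodim_of_irreducible_closed_subset (X : Type*) [TopologicalSpace X]
    [IrreducibleSpace X] (heq : IsEquicodim X) (hfin : spaceDim X ≠ ⊤)
    (hmax : ∀ p q : LTSeries (IrreducibleCloseds X),
      IsMaximalChain p → IsMaximalChain q → p.length = q.length) :
    ∀ Y Y₀ : IrreducibleCloseds X, Y₀ ≤ Y → IsMin Y₀ → relCodim Y₀ Y = chainDim Y := by
  intro Y Y₀ hle hmin
  have hne : ∃ p : LTSeries (IrreducibleCloseds X), p.head = Y₀ ∧ p.last = Y := by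
    rcases eq_or_lt_of_le hle with h | h
    · exact ⟨RelSeries.singleton _ Y₀, RelSeries.head_singleton _,
        (RelSeries.last_singleton _).trans h⟩
    · refine ⟨(RelSeries.singleton _ Y₀).snoc Y
        (by rw [RelSeries.last_singleton]; exact h), ?_, ?_⟩
      · rw [RelSeries.head_snoc, RelSeries.head_singleton]
      · rw [RelSeries.last_snoc]
  obtain ⟨s, ⟨hsh, hsl⟩, hsmax⟩ := exists_maximizer' hfin _ hne
  have hssat : IsSaturatedChain s :=
    sat_of_max' fun q hq hq' => hsmax q ⟨hq.trans hsh, hq'.trans hsl⟩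
  have hsmin : IsMin s.head := by rw [hsh]; exact hmin
  have hrel : relCodim Y₀ Y = (s.length : ℕ∞) := by
    apply le_antisymm
    · exact iSup_le fun pp => by exact_mod_cast hsmax pp.1 pp.2
    · exact le_iSup_of_le ⟨s, hsh, hsl⟩ le_rfl
  have hcd : chainDim Y = (s.length : ℕ∞) := by
    apply le_antisymm
    · refine iSup_le fun pp => ?_
      obtain ⟨p, hp⟩ := pp
      obtain ⟨q, hql, hqlen⟩ : ∃ q : LTSeries (IrreducibleCloseds X),
          q.last = Y ∧ p.length ≤ q.length := by
        rcases eq_or_lt_of_le hp with h | h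
        · exact ⟨p, h, le_rfl⟩
        · exact ⟨p.snoc Y h, RelSeries.last_snoc p Y h,
            by rw [RelSeries.snoc_length]; omega⟩
      obtain ⟨m, hml, hmmax⟩ := exists_maximizer' hfin (fun q => q.last = Y) ⟨q, hql⟩
      have hmsat : IsSaturatedChain m := sat_of_max' fun q' _ h2 => hmmax q' (h2.trans hml)
      have hmmin : IsMin m.head := min_head_of_max' fun q' h' => hmmax q' (h'.trans hml)
      have hkey : m.length = s.length := key_len' hfin hmax hmsat hmmin hml hssat hsmin hsl
      have : p.length ≤ s.length := le_trans hqlen (hkey ▸ hmmax q hql)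
      exact_mod_cast this
    · exact le_iSup_of_le ⟨s, le_of_eq hsl⟩ le_rfl
  rw [hrel, hcd]
end

section
/- Let X be an irreducible, equicodimensional, finite-dimensional, Jacobson topological space, and let U be a non-empty open subset of X. Then U is irreducible, equicodimensional, finite-dimensional, and Jacobson, and moreover dim U = dim X. -/
open TopologicalSpace Order
section OpenSubsetAux

open Topology

variable {X : Type*} [TopologicalSpace X] {U : Set X}

/-- Closure of the image: from irreducible closeds of `U` to those of `X`. -/
noncomputable def eMap (U : Set X) (Y : IrreducibleCloseds U) : IrreducibleCloseds X where
  carrier := closure ((↑) '' (Y : Set U))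
  isIrreducible' := (Y.isIrreducible.image _ continuous_subtype_val.continuousOn).closure
  isClosed' := isClosed_closure

lemma preimage_eMap (Y : IrreducibleCloseds U) :
    (↑) ⁻¹' (eMap U Y : Set X) = (Y : Set U) := by
  show Subtype.val ⁻¹' closure (Subtype.val '' (Y : Set U)) = (Y : Set U)
  rw [← IsInducing.subtypeVal.closure_eq_preimage_closure_image]
  exact Y.isClosed.closure_eq

lemma eMap_le_iff {Y Y' : IrreducibleCloseds U} : eMap U Y ≤ eMap U Y' ↔ Y ≤ Y' := by
  constructor
  · intro h y hy
    have h1 : (y : X) ∈ (eMap U Y : Set X) := subset_closure ⟨y, hy, rfl⟩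
    have h2 : (y : X) ∈ (eMap U Y' : Set X) := h h1
    rwa [← Set.mem_preimage, preimage_eMap] at h2
  · intro h
    exact closure_mono (Set.image_mono h)

lemma eMap_strictMono : StrictMono (eMap U) := by
  intro Y Y' h
  refine lt_of_le_of_ne (eMap_le_iff.mpr h.le) fun hEq => h.ne ?_
  exact le_antisymm h.le (eMap_le_iff.mp (le_of_eq hEq.symm))

lemma eMap_inter_nonempty (Y : IrreducibleCloseds U) :
    ((eMap U Y : Set X) ∩ U).Nonempty := by
  obtain ⟨y, hy⟩ := Y.isIrreducible.nonempty
  exact ⟨y, subset_closure ⟨y, hy, rfl⟩, y.2⟩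

/-- Preimage: from irreducible closeds of `X` meeting `U` to those of `U`. -/
noncomputable def rMap (hU : IsOpen U) (Z : IrreducibleCloseds X)
    (hZ : ((Z : Set X) ∩ U).Nonempty) : IrreducibleCloseds U where
  carrier := (↑) ⁻¹' (Z : Set X)
  isIrreducible' := by
    obtain ⟨x, hxZ, hxU⟩ := hZ
    exact ⟨⟨⟨x, hxU⟩, hxZ⟩, Z.isIrreducible.2.preimage hU.isOpenEmbedding_subtypeVal⟩
  isClosed' := Z.isClosed.preimage continuous_subtype_val

lemma eMap_rMap (hU : IsOpen U) (Z : IrreducibleCloseds X)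
    (hZ : ((Z : Set X) ∩ U).Nonempty) : eMap U (rMap hU Z hZ) = Z := by
  apply IrreducibleCloseds.ext
  show closure (Subtype.val '' (Subtype.val ⁻¹' (Z : Set X))) = Z
  rw [Set.image_preimage_eq_inter_range, Subtype.range_coe]
  refine le_antisymm (Z.isClosed.closure_subset_iff.mpr Set.inter_subset_left) ?_
  exact subset_closure_inter_of_isPreirreducible_of_isOpen Z.isIrreducible.2 hU hZ

lemma rMap_eMap (hU : IsOpen U) (Y : IrreducibleCloseds U) :
    rMap hU (eMap U Y) (eMap_inter_nonempty Y) = Y :=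
  IrreducibleCloseds.ext (preimage_eMap Y)

lemma rMap_lt_rMap (hU : IsOpen U) {A B : IrreducibleCloseds X}
    (hA : ((A : Set X) ∩ U).Nonempty) (hB : ((B : Set X) ∩ U).Nonempty) (h : A < B) :
    rMap hU A hA < rMap hU B hB := by
  refine lt_of_le_of_ne (fun z hz => h.le hz) fun hEq => h.ne ?_
  rw [← eMap_rMap hU A hA, ← eMap_rMap hU B hB, hEq]

lemma codimAbove_eMap (hU : IsOpen U) (Y : IrreducibleCloseds U) :
    codimAbove Y = codimAbove (eMap U Y) := by
  apply le_antisymm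
  · refine iSup_le fun p => ?_
    refine le_iSup_of_le ⟨p.1.map (eMap U) eMap_strictMono, by simp [p.2]⟩ ?_
    simp [LTSeries.map]
  · refine iSup_le fun q => ?_
    have hmem : ∀ i, (((q.1 i : IrreducibleCloseds X) : Set X) ∩ U).Nonempty := by
      intro i
      have h1 : eMap U Y ≤ q.1 i :=
        le_trans (le_of_eq q.2.symm) (q.1.monotone (Fin.zero_le i))
      exact (eMap_inter_nonempty Y).mono (Set.inter_subset_inter_left U h1)
    refine le_iSup_of_le ⟨LTSeries.mk q.1.length (fun i => rMap hU (q.1 i) (hmem i))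
      (fun i j hij => rMap_lt_rMap hU _ _ (q.1.strictMono hij)), ?_⟩ ?_
    · apply IrreducibleCloseds.ext
      show Subtype.val ⁻¹' (q.1.toFun 0 : Set X) = (Y : Set U)
      rw [show q.1.toFun 0 = eMap U Y from q.2]
      exact preimage_eMap Y
    · simp [LTSeries.mk]

lemma isMin_of_carrier_singleton {Y : IrreducibleCloseds X} {x : X}
    (h : (Y : Set X) = {x}) : IsMin Y := by
  intro Z hZ
  have h2 : (Z : Set X) = {x} :=
    (Set.Nonempty.subset_singleton_iff Z.isIrreducible.nonempty).mp (h ▸ hZ)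
  exact le_of_eq (IrreducibleCloseds.ext (h2.trans h.symm)).symm

lemma exists_min_head (hfin : spaceDim X ≠ ⊤) (p : LTSeries (IrreducibleCloseds X)) :
    ∃ q : LTSeries (IrreducibleCloseds X), p.length ≤ q.length ∧ IsMin q.head := by
  obtain ⟨n, hn⟩ := WithTop.ne_top_iff_exists.mp hfin
  have hbound : ∀ q : LTSeries (IrreducibleCloseds X), q.length ≤ n := by
    intro q
    have h1 : (q.length : ℕ∞) ≤ spaceDim X := le_iSup (fun p : LTSeries _ => (p.length : ℕ∞)) q
    rw [← hn] at h1
    exact Nat.cast_le.mp h1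
  have key : ∀ k (p : LTSeries (IrreducibleCloseds X)), n - p.length ≤ k →
      ∃ q : LTSeries (IrreducibleCloseds X), p.length ≤ q.length ∧ IsMin q.head := by
    intro k
    induction k with
    | zero =>
      intro p hp
      by_cases hmin : IsMin p.head
      · exact ⟨p, le_rfl, hmin⟩
      · obtain ⟨b, hb⟩ := not_isMin_iff.mp hmin
        have := hbound (p.cons b hb)
        have hlen : (p.cons b hb).length = p.length + 1 := by
          simp [RelSeries.cons_length]
        omega
    | succ k ih =>
      intro p hp
      by_cases hmin : IsMin p.head
      · exact ⟨p, le_rfl, hmin⟩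
      · obtain ⟨b, hb⟩ := not_isMin_iff.mp hmin
        have h1 := hbound (p.cons b hb)
        have hlen : (p.cons b hb).length = p.length + 1 := by
          simp [RelSeries.cons_length]
        obtain ⟨q, hq1, hq2⟩ := ih (p.cons b hb) (by omega)
        exact ⟨q, by omega, hq2⟩
  exact key (n - p.length) p le_rfl

lemma codimAbove_le_spaceDim (Y : IrreducibleCloseds X) : codimAbove Y ≤ spaceDim X :=
  iSup_le fun p => le_iSup (fun q : LTSeries (IrreducibleCloseds X) => (q.length : ℕ∞)) p.1

end OpenSubsetAux

theorem open_subset_of_equicodim_jacobson (X : Type*) [TopologicalSpace X]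
    [IrreducibleSpace X] [JacobsonSpace X] (heq : IsEquicodim X) (hfin : spaceDim X ≠ ⊤)
    (U : Set X) (hU : IsOpen U) (hne : U.Nonempty) :
    IrreducibleSpace ↥U ∧ JacobsonSpace ↥U ∧ IsEquicodim ↥U ∧
      spaceDim ↥U ≠ ⊤ ∧ spaceDim ↥U = spaceDim X := by
  have hemb : Topology.IsOpenEmbedding ((↑) : U → X) := hU.isOpenEmbedding_subtypeVal
  haveI hJ : JacobsonSpace ↥U := JacobsonSpace.of_isOpenEmbedding hemb
  haveI hIrr : IrreducibleSpace ↥U :=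
    Subtype.irreducibleSpace
      ⟨hne, (PreirreducibleSpace.isPreirreducible_univ (X := X)).open_subset hU
        (Set.subset_univ U)⟩
  -- a closed point of `X` inside `U`
  have hdense : Dense (closedPoints X) := by
    rw [dense_iff_closure_eq]; exact closure_closedPoints
  obtain ⟨x₀, hx₀U, hx₀c⟩ := hdense.inter_open_nonempty U hU hne
  rw [mem_closedPoints_iff] at hx₀c
  -- the corresponding singletons
  set Y₀ : IrreducibleCloseds X := ⟨{x₀}, isIrreducible_singleton, hx₀c⟩ with hY₀
  have hx₀cU : IsClosed {(⟨x₀, hx₀U⟩ : U)} := by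
    have := hemb.preimage_closedPoints
    have h1 : (⟨x₀, hx₀U⟩ : U) ∈ closedPoints U := by
      rw [← this]; exact hx₀c
    exact h1
  set Yu : IrreducibleCloseds U := ⟨{⟨x₀, hx₀U⟩}, isIrreducible_singleton, hx₀cU⟩ with hYu
  have heYu : eMap U Yu = Y₀ := by
    apply IrreducibleCloseds.ext
    show closure (Subtype.val '' {(⟨x₀, hx₀U⟩ : U)}) = {x₀}
    rw [Set.image_singleton]
    exact hx₀c.closure_eq
  have hY₀min : IsMin Y₀ := isMin_of_carrier_singleton rfl
  -- key fact: minimal irreducible closeds of U map to minimal ones of X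
  have hminmap : ∀ Y : IrreducibleCloseds U, IsMin Y → IsMin (eMap U Y) := by
    intro Y hY
    obtain ⟨y, hyY, hyc⟩ := nonempty_inter_closedPoints (X := U)
      Y.isIrreducible.nonempty Y.isClosed.isLocallyClosed
    rw [mem_closedPoints_iff] at hyc
    have hle : (⟨{y}, isIrreducible_singleton, hyc⟩ : IrreducibleCloseds U) ≤ Y := by
      intro z hz; rwa [Set.mem_singleton_iff.mp hz]
    have hYeq : (Y : Set U) = {y} := le_antisymm (hY hle) hle
    have hycX : IsClosed {(y : X)} := by
      have h1 : y ∈ closedPoints U := hyc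
      rw [← hemb.preimage_closedPoints] at h1
      exact h1
    refine isMin_of_carrier_singleton (x := (y : X)) ?_
    show closure (Subtype.val '' (Y : Set U)) = {(y : X)}
    rw [hYeq, Set.image_singleton]
    exact hycX.closure_eq
  -- equicodimensionality of U
  have heqU : IsEquicodim ↥U := by
    intro Y Y' hY hY'
    rw [codimAbove_eMap hU Y, codimAbove_eMap hU Y']
    exact heq _ _ (hminmap Y hY) (hminmap Y' hY')
  -- dimension equality
  have hdim : spaceDim ↥U = spaceDim X := by
    apply le_antisymm
    · refine iSup_le fun p => ?_
      refine le_iSup_of_le (p.map (eMap U) eMap_strictMono) ?_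
      simp [LTSeries.map]
    · refine iSup_le fun p => ?_
      obtain ⟨q, hq1, hq2⟩ := exists_min_head hfin p
      have h1 : (q.length : ℕ∞) ≤ codimAbove q.head :=
        le_iSup (fun r : {r : LTSeries (IrreducibleCloseds X) // r.head = q.head} =>
          (r.1.length : ℕ∞)) ⟨q, rfl⟩
      have h2 : codimAbove q.head = codimAbove Y₀ := heq _ _ hq2 hY₀min
      have h3 : codimAbove Y₀ = codimAbove Yu := by
        rw [codimAbove_eMap hU Yu, heYu]
      calc (p.length : ℕ∞) ≤ (q.length : ℕ∞) := Nat.cast_le.mpr hq1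
        _ ≤ codimAbove q.head := h1
        _ = codimAbove Yu := by rw [h2, h3]
        _ ≤ spaceDim ↥U := codimAbove_le_spaceDim Yu
  exact ⟨hIrr, hJ, heqU, hdim ▸ hfin, hdim⟩
end

section
/- Let S be a Jacobson, catenary, locally Noetherian scheme all of whose irreducible components are finite-dimensional and equicodimensional, and let s ∈ S be a closed point. Then dim_s S = dim O_{S,s}, i.e., the local dimension of S at s equals the Krull dimension of the local ring at s. -/
open AlgebraicGeometry TopologicalSpace Order
open TopologicalSpace Order

open AlgebraicGeometry TopologicalSpace Order Set

section helpers
variable {X : Type*} [TopologicalSpace X]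

lemma closure_inter_open_eq {Z U : Set X} (hZ : IsIrreducible Z) (hZc : IsClosed Z)
    (hU : IsOpen U) (hne : (Z ∩ U).Nonempty) : closure (Z ∩ U) = Z :=
  le_antisymm (hZc.closure_subset_iff.mpr inter_subset_left)
    (subset_closure_inter_of_isPreirreducible_of_isOpen hZ.2 hU hne)

lemma isIrreducible_preimage_val {T Z : Set X} (hZ : IsIrreducible Z) (hZT : Z ⊆ T) :
    IsIrreducible (Subtype.val ⁻¹' Z : Set T) := by
  constructor
  · obtain ⟨x, hx⟩ := hZ.1
    exact ⟨⟨x, hZT hx⟩, hx⟩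
  · rintro u v hu hv ⟨x, hxZ, hxu⟩ ⟨y, hyZ, hyv⟩
    obtain ⟨u', hu', rfl⟩ := isOpen_induced_iff.mp hu
    obtain ⟨v', hv', rfl⟩ := isOpen_induced_iff.mp hv
    obtain ⟨z, hz, hzu, hzv⟩ := hZ.2 u' v' hu' hv' ⟨x, hxZ, hxu⟩ ⟨y, hyZ, hyv⟩
    exact ⟨⟨z, hZT hz⟩, hz, hzu, hzv⟩

/-- restriction of an irreducible closed set to an open subset it meets -/
noncomputable def restrictOpenIC {U : Set X} (hU : IsOpen U) (Z : IrreducibleCloseds X)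
    (hne : ((Z : Set X) ∩ U).Nonempty) : IrreducibleCloseds U where
  carrier := Subtype.val ⁻¹' (Z : Set X)
  isIrreducible' := by
    constructor
    · obtain ⟨x, hx, hxU⟩ := hne
      exact ⟨⟨x, hxU⟩, hx⟩
    · exact Z.isIrreducible'.2.preimage hU.isOpenEmbedding_subtypeVal
  isClosed' := Z.isClosed'.preimage continuous_subtype_val

lemma image_restrictOpenIC {U : Set X} (hU : IsOpen U) (Z : IrreducibleCloseds X)
    (hne : ((Z : Set X) ∩ U).Nonempty) :
    Subtype.val '' ((restrictOpenIC hU Z hne : Set U)) = (Z : Set X) ∩ U := by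
  show Subtype.val '' (Subtype.val ⁻¹' (Z : Set X)) = (Z : Set X) ∩ U
  rw [Set.image_preimage_eq_inter_range, Subtype.range_coe]

lemma restrictOpenIC_lt {U : Set X} (hU : IsOpen U) {Z Z' : IrreducibleCloseds X}
    (h : Z < Z') (hne : ((Z : Set X) ∩ U).Nonempty) (hne' : ((Z' : Set X) ∩ U).Nonempty) :
    restrictOpenIC hU Z hne < restrictOpenIC hU Z' hne' := by
  refine lt_of_le_of_ne (fun x hx => h.le hx) (fun hEq => h.ne ?_)
  have h1 : (Z : Set X) ∩ U = (Z' : Set X) ∩ U := by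
    rw [← image_restrictOpenIC hU Z hne, ← image_restrictOpenIC hU Z' hne', hEq]
  have h2 : closure ((Z : Set X) ∩ U) = (Z : Set X) :=
    closure_inter_open_eq (Z := (Z : Set X)) Z.isIrreducible' Z.isClosed' hU hne
  have h3 : closure ((Z' : Set X) ∩ U) = (Z' : Set X) :=
    closure_inter_open_eq (Z := (Z' : Set X)) Z'.isIrreducible' Z'.isClosed' hU hne'
  apply SetLike.ext'
  rw [← h2, ← h3, h1]

/-- closure in the ambient space of an irreducible closed subset of a subspace -/
def closureIC {U : Set X} (W : IrreducibleCloseds U) : IrreducibleCloseds X where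
  carrier := closure (Subtype.val '' (W : Set U))
  isIrreducible' := (W.isIrreducible'.image _ continuous_subtype_val.continuousOn).closure
  isClosed' := isClosed_closure

lemma preimage_closureIC {U : Set X} (W : IrreducibleCloseds U) :
    Subtype.val ⁻¹' (closureIC W : Set X) = (W : Set U) := by
  ext x
  show (x : X) ∈ closure (Subtype.val '' (W : Set U)) ↔ x ∈ (W : Set U)
  rw [← closure_subtype, (show IsClosed (W : Set U) from W.isClosed').closure_eq]

lemma closureIC_strictMono {U : Set X} :
    StrictMono (closureIC : IrreducibleCloseds U → IrreducibleCloseds X) := by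
  have inj : Function.Injective (closureIC : IrreducibleCloseds U → IrreducibleCloseds X) := by
    intro W W' h
    apply SetLike.ext'
    rw [← preimage_closureIC W, ← preimage_closureIC W', h]
  have mono : Monotone (closureIC : IrreducibleCloseds U → IrreducibleCloseds X) := by
    intro W W' h
    exact closure_mono (Set.image_mono h)
  exact mono.strictMono_of_injective inj

/-- restriction of an irreducible closed subset contained in a subspace -/
def restrictSubIC {T : Set X} (Z : IrreducibleCloseds X) (hZT : (Z : Set X) ⊆ T) :
    IrreducibleCloseds T where
  carrier := Subtype.val ⁻¹' (Z : Set X)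
  isIrreducible' := isIrreducible_preimage_val Z.isIrreducible' hZT
  isClosed' := Z.isClosed'.preimage continuous_subtype_val

lemma image_restrictSubIC {T : Set X} (Z : IrreducibleCloseds X) (hZT : (Z : Set X) ⊆ T) :
    Subtype.val '' ((restrictSubIC Z hZT : Set T)) = (Z : Set X) := by
  show Subtype.val '' (Subtype.val ⁻¹' (Z : Set X)) = (Z : Set X)
  rw [Set.image_preimage_eq_inter_range, Subtype.range_coe, Set.inter_eq_left.mpr hZT]

lemma restrictSubIC_lt {T : Set X} {Z Z' : IrreducibleCloseds X} (h : Z < Z')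
    (hZT : (Z : Set X) ⊆ T) (hZT' : (Z' : Set X) ⊆ T) :
    restrictSubIC Z hZT < restrictSubIC Z' hZT' := by
  refine lt_of_le_of_ne (fun x hx => h.le hx) (fun hEq => h.ne ?_)
  apply SetLike.ext'
  rw [← image_restrictSubIC Z hZT, ← image_restrictSubIC Z' hZT', hEq]

lemma isMin_singletonIC {x : X} (hx : IsClosed ({x} : Set X)) :
    IsMin (⟨{x}, isIrreducible_singleton, hx⟩ : IrreducibleCloseds X) := by
  intro W hW
  have hcar : (W : Set X) = {x} := by
    obtain ⟨y, hy⟩ := W.isIrreducible'.1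
    have hyx : y = x := hW hy
    subst hyx
    exact le_antisymm hW (Set.singleton_subset_iff.mpr hy)
  exact le_of_eq (SetLike.ext' hcar.symm)

end helpers

section part2
open Set Topology

lemma codimAbove_eq_coheight {X : Type*} [TopologicalSpace X] (Y : IrreducibleCloseds X) :
    codimAbove Y = coheight Y := by
  rw [coheight_eq_iSup_head_eq, iSup_subtype']
  rfl

lemma coe_iSup_le_withBot {ι : Sort*} [Nonempty ι] (f : ι → ℕ∞) (c : WithBot ℕ∞)
    (h : ∀ i, (f i : WithBot ℕ∞) ≤ c) : ((⨆ i, f i : ℕ∞) : WithBot ℕ∞) ≤ c := by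
  obtain ⟨i⟩ := ‹Nonempty ι›
  cases c with
  | bot => exact absurd (h i) (by simp)
  | coe c => exact WithBot.coe_le_coe.mpr (iSup_le fun j => WithBot.coe_le_coe.mp (h j))

lemma ringKrullDim_stalk_eq_codimAbove (S : Scheme) (s : S) (hs : IsClosed ({s} : Set S)) :
    ringKrullDim (S.presheaf.stalk s) =
      (codimAbove (⟨{s}, isIrreducible_singleton, hs⟩ : IrreducibleCloseds S) : WithBot ℕ∞) := by
  classical
  set Ys : IrreducibleCloseds S := ⟨{s}, isIrreducible_singleton, hs⟩ with hYs
  set f : Spec (S.presheaf.stalk s) → S := ⇑(S.fromSpecStalk s).base with hf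
  have hemb : IsEmbedding f := (inferInstance : IsPreimmersion (S.fromSpecStalk s)).base_embedding
  set g : PrimeSpectrum (S.presheaf.stalk s) → IrreducibleCloseds S := fun p =>
    ⟨closure {f p}, isIrreducible_singleton.closure, isClosed_closure⟩ with hg
  have glemma : ∀ p q : PrimeSpectrum (S.presheaf.stalk s), p ≤ q ↔ g q ≤ g p := by
    intro p q
    rw [PrimeSpectrum.le_iff_specializes]
    refine Iff.trans (hemb.toIsInducing.specializes_iff (x := p) (y := q)).symm ?_
    constructor
    · intro h
      exact closure_minimal (Set.singleton_subset_iff.mpr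
        (specializes_iff_mem_closure.mp h)) isClosed_closure
    · intro h
      exact specializes_iff_mem_closure.mpr (h (subset_closure rfl))
  have ganti : ∀ p q : PrimeSpectrum (S.presheaf.stalk s), p < q ↔ g q < g p := by
    intro p q
    rw [lt_iff_le_not_ge, lt_iff_le_not_ge, glemma p q, glemma q p]
  have ginj : Function.Injective g := fun p q h =>
    le_antisymm ((glemma p q).mpr h.ge) ((glemma q p).mpr h.le)
  have gtop : g (IsLocalRing.closedPoint (S.presheaf.stalk s)) = Ys := by
    apply SetLike.ext'
    show closure {f _} = ({s} : Set S)
    rw [hf]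
    rw [Scheme.fromSpecStalk_closedPoint]
    exact hs.closure_eq
  have gsurj : ∀ Z : IrreducibleCloseds S, s ∈ (Z : Set S) → ∃ p, g p = Z := by
    intro Z hsZ
    have hZirr : IsIrreducible (Z : Set S) := Z.isIrreducible'
    have hyZ : closure {hZirr.genericPoint} = (Z : Set S) := by
      have h := hZirr.genericPoint_closure_eq
      rwa [(show IsClosed (Z : Set S) from Z.isClosed').closure_eq] at h
    have hy : hZirr.genericPoint ⤳ s := specializes_iff_mem_closure.mpr (hyZ.symm ▸ hsZ)
    have hrange : hZirr.genericPoint ∈ Set.range f := by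
      rw [hf, Scheme.range_fromSpecStalk]; exact hy
    obtain ⟨p, hp⟩ := hrange
    exact ⟨p, SetLike.ext' (by show closure {f p} = (Z : Set S); rw [hp, hyZ])⟩
  have key : height (IsLocalRing.closedPoint (S.presheaf.stalk s)) = coheight Ys := by
    apply le_antisymm
    · refine height_le fun p hp => ?_
      have hgsm : StrictMono (g ∘ OrderDual.ofDual :
          (PrimeSpectrum (S.presheaf.stalk s))ᵒᵈ → IrreducibleCloseds S) := by
        intro a b hab
        exact (ganti _ _).mp hab
      let pr : LTSeries (PrimeSpectrum (S.presheaf.stalk s))ᵒᵈ := p.reverse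
      have hprh : pr.head = p.last := RelSeries.head_reverse p
      have hle : Ys ≤ (pr.map (g ∘ OrderDual.ofDual) hgsm).head := by
        rw [LTSeries.head_map]
        show Ys ≤ g pr.head
        rw [hprh, hp, gtop]
      exact length_le_coheight (x := Ys) hle
    · refine coheight_le fun q hq => ?_
      have hmem : ∀ i, s ∈ (q.toFun i : Set S) := by
        intro i
        have h0 : q.head ≤ q.toFun i := q.monotone (Fin.zero_le i)
        rw [hq] at h0
        exact h0 rfl
      choose pick hpick using fun i => gsurj (q.toFun i) (hmem i)
      let r : LTSeries (PrimeSpectrum (S.presheaf.stalk s)) :=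
        { length := q.length
          toFun := fun i => pick i.rev
          step := fun i => by
            show pick i.castSucc.rev < pick i.succ.rev
            rw [ganti, hpick, hpick, Fin.rev_succ, Fin.rev_castSucc]
            exact q.step i.rev }
      have hrlast : r.last = IsLocalRing.closedPoint (S.presheaf.stalk s) := by
        apply ginj
        rw [gtop]
        show g (pick (Fin.last q.length).rev) = Ys
        rw [Fin.rev_last, hpick]
        exact hq
      have := length_le_height_last (p := r)
      rw [hrlast] at this
      exact this
  rw [ringKrullDim, krullDim_eq_iSup_height, codimAbove_eq_coheight, ← key]
  apply le_antisymm
  · exact iSup_le fun p => WithBot.coe_le_coe.mpr (height_mono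
      ((PrimeSpectrum.le_iff_specializes _ _).mpr (IsLocalRing.specializes_closedPoint p)))
  · exact le_iSup (fun a => (height a : WithBot ℕ∞)) (IsLocalRing.closedPoint _)

end part2

section part3
open Set Topology

lemma codimAbove_le_dim_open {X : Type*} [TopologicalSpace X] {s : X} (hs : IsClosed ({s} : Set X))
    {U : Set X} (hU : IsOpen U) (hsU : s ∈ U) :
    (codimAbove (⟨{s}, isIrreducible_singleton, hs⟩ : IrreducibleCloseds X) : WithBot ℕ∞) ≤
      topologicalKrullDim U := by
  set Ys : IrreducibleCloseds X := ⟨{s}, isIrreducible_singleton, hs⟩ with hYs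
  haveI : Nonempty {p : LTSeries (IrreducibleCloseds X) // p.head = Ys} :=
    ⟨⟨RelSeries.singleton _ Ys, rfl⟩⟩
  rw [codimAbove]
  refine coe_iSup_le_withBot _ _ ?_
  rintro ⟨p, hp⟩
  have hmem : ∀ i, s ∈ (p.toFun i : Set X) := by
    intro i
    have h0 : p.head ≤ p.toFun i := p.monotone (Fin.zero_le i)
    rw [hp] at h0
    exact h0 rfl
  have hne : ∀ i, ((p.toFun i : Set X) ∩ U).Nonempty := fun i => ⟨s, hmem i, hsU⟩
  let q : LTSeries (IrreducibleCloseds U) :=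
    { length := p.length
      toFun := fun i => restrictOpenIC hU (p.toFun i) (hne i)
      step := fun i => restrictOpenIC_lt hU (p.step i) _ _ }
  exact le_iSup (fun r : LTSeries (IrreducibleCloseds U) => (r.length : WithBot ℕ∞)) q

lemma exists_good_open (S : Scheme) [IsLocallyNoetherian S] (s : S) :
    ∃ U : Set S, IsOpen U ∧ s ∈ U ∧
      ∀ T ∈ irreducibleComponents S, (T ∩ U).Nonempty → s ∈ T := by
  obtain ⟨_, ⟨V, hV, rfl⟩, hsV, -⟩ :=
    S.isBasis_affineOpens.exists_subset_of_mem_open (Set.mem_univ s) isOpen_univ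
  haveI := IsLocallyNoetherian.component_noetherian ⟨V, hV⟩
  haveI : NoetherianSpace ((V : Set S) : Type _) := noetherianSpace_of_isAffineOpen V hV
  have hVopen : IsOpen (V : Set S) := V.2
  set F : Set (Set S) := {T | T ∈ irreducibleComponents S ∧ (T ∩ ↑V).Nonempty} with hF
  have hFfin : F.Finite := by
    have hmaps : ∀ T ∈ F, (Subtype.val ⁻¹' T : Set (V : Set S)) ∈ irreducibleComponents ((V : Set S) : Type _) := by
      rintro T ⟨hTcomp, hTne⟩
      have hTirr : IsIrreducible T := hTcomp.1
      have hTclosed : IsClosed T := isClosed_of_mem_irreducibleComponents T hTcomp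
      constructor
      · constructor
        · obtain ⟨x, hxT, hxV⟩ := hTne
          exact ⟨⟨x, hxV⟩, hxT⟩
        · exact hTirr.2.preimage hVopen.isOpenEmbedding_subtypeVal
      · intro W hW hle
        have hWirr : IsIrreducible (closure (Subtype.val '' W) : Set S) :=
          (hW.image _ continuous_subtype_val.continuousOn).closure
        have hTsub : T ⊆ closure (Subtype.val '' W) := by
          have h1 : T ∩ ↑V ⊆ Subtype.val '' W := by
            rintro x ⟨hxT, hxV⟩
            exact ⟨⟨x, hxV⟩, hle hxT, rfl⟩
          calc T = closure (T ∩ ↑V) :=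
                (closure_inter_open_eq hTirr hTclosed hVopen hTne).symm
            _ ⊆ closure (Subtype.val '' W) := closure_mono h1
        have hTeq : closure (Subtype.val '' W) ⊆ T := hTcomp.2 hWirr hTsub
        intro w hw
        have : (w : S) ∈ closure (Subtype.val '' W) := subset_closure ⟨w, hw, rfl⟩
        exact hTeq this
    have hinj : Set.InjOn (fun T => (Subtype.val ⁻¹' T : Set (V : Set S))) F := by
      rintro T ⟨hT, hTne⟩ T' ⟨hT', hTne'⟩ h
      have im : ∀ (A : Set S), (A ∩ ↑V : Set S) = Subtype.val '' (Subtype.val ⁻¹' A : Set (V : Set S)) := by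
        intro A
        rw [Set.image_preimage_eq_inter_range, Subtype.range_coe, Set.inter_comm]
      calc T = closure (T ∩ ↑V) :=
            (closure_inter_open_eq hT.1 (isClosed_of_mem_irreducibleComponents T hT)
              hVopen hTne).symm
        _ = closure (T' ∩ ↑V) := by
              have h' : (Subtype.val ⁻¹' T : Set (V : Set S)) = Subtype.val ⁻¹' T' := h
              rw [im T, im T', h']
        _ = T' := closure_inter_open_eq hT'.1 (isClosed_of_mem_irreducibleComponents T' hT')
              hVopen hTne'
    exact Set.Finite.of_finite_image
      (NoetherianSpace.finite_irreducibleComponents.subset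
        (Set.image_subset_iff.mpr fun T hT => hmaps T hT)) hinj
  set B : Set S := ⋃ T ∈ {T ∈ F | s ∉ T}, T with hB
  have hBclosed : IsClosed B :=
    (hFfin.subset (Set.sep_subset _ _)).isClosed_biUnion
      (fun T hT => isClosed_of_mem_irreducibleComponents T hT.1.1)
  refine ⟨↑V ∩ Bᶜ, hVopen.inter hBclosed.isOpen_compl, ⟨hsV, ?_⟩, ?_⟩
  · intro hsB
    obtain ⟨T, hT, hsT⟩ := Set.mem_iUnion₂.mp hsB
    exact hT.2 hsT
  · rintro T hTcomp ⟨x, hxT, hxV, hxB⟩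
    by_contra hsT
    exact hxB (Set.mem_iUnion₂.mpr ⟨T, ⟨⟨hTcomp, ⟨x, hxT, hxV⟩⟩, hsT⟩, hxT⟩)

end part3

section part4
open Set Topology

lemma dim_open_le (S : Scheme) (hJ : JacobsonSpace S)
    (hcomp : ∀ T ∈ irreducibleComponents S, IsEquicodim T)
    (s : S) (hs : IsClosed ({s} : Set S)) {U : Set S} (hsU : s ∈ U)
    (hgood : ∀ T ∈ irreducibleComponents S, (T ∩ U).Nonempty → s ∈ T) :
    topologicalKrullDim U ≤
      (codimAbove (⟨{s}, isIrreducible_singleton, hs⟩ : IrreducibleCloseds S) : WithBot ℕ∞) := by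
  set Ys : IrreducibleCloseds S := ⟨{s}, isIrreducible_singleton, hs⟩ with hYs
  rw [topologicalKrullDim, krullDim]
  refine iSup_le fun q => WithBot.coe_le_coe.mpr ?_
  -- q : LTSeries (IrreducibleCloseds U)
  set p : LTSeries (IrreducibleCloseds S) := q.map closureIC closureIC_strictMono with hpdef
  have hmeet : ∀ i, ((p.toFun i : Set S) ∩ U).Nonempty := by
    intro i
    obtain ⟨w, hw⟩ := (q.toFun i).isIrreducible'.1
    exact ⟨(w : S), subset_closure (Set.mem_image_of_mem _ hw), w.2⟩
  obtain ⟨t, htpre, htsub, htmax⟩ :=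
    exists_preirreducible (p.last : Set S) p.last.isIrreducible'.2
  have hTirr : IsIrreducible t := ⟨p.last.isIrreducible'.1.mono htsub, htpre⟩
  have hTcomp : t ∈ irreducibleComponents S :=
    ⟨hTirr, fun u hu hle => (htmax u hu.2 hle).le⟩
  have hTclosed : IsClosed t := isClosed_of_mem_irreducibleComponents t hTcomp
  have hsT : s ∈ t := by
    refine hgood t hTcomp ?_
    obtain ⟨x, hx1, hx2⟩ := hmeet (Fin.last p.length)
    exact ⟨x, htsub hx1, hx2⟩
  have hsubT : ∀ i, (p.toFun i : Set S) ⊆ t := by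
    intro i
    exact le_trans (p.monotone (Fin.le_last i) : p.toFun i ≤ p.last) htsub
  set q' : LTSeries (IrreducibleCloseds t) :=
    { length := p.length
      toFun := fun i => restrictSubIC (p.toFun i) (hsubT i)
      step := fun i => restrictSubIC_lt (p.step i) _ _ } with hq'
  -- a closed point of S inside the head of the chain
  have hZ0ne : ((p.toFun 0 : Set S) ∩ closedPoints S).Nonempty := by
    rcases Set.eq_empty_or_nonempty ((p.toFun 0 : Set S) ∩ closedPoints S) with h | h
    · exfalso
      obtain ⟨x0, hx0⟩ := (p.toFun 0).isIrreducible'.1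
      have hcl := hJ.closure_inter_closedPoints (Z := ((p.toFun 0 : Set S))) (p.toFun 0).isClosed'
      rw [h, closure_empty] at hcl
      have hx0' : x0 ∈ (p.toFun 0 : Set S) := hx0
      rw [← hcl] at hx0'
      exact hx0'
    · exact h
  obtain ⟨x, hxZ, hxcl⟩ := hZ0ne
  have hxT : x ∈ t := hsubT 0 hxZ
  have hxclT : IsClosed ({⟨x, hxT⟩} : Set t) := by
    have hset : ({⟨x, hxT⟩} : Set t) = Subtype.val ⁻¹' {x} := by
      ext y; simp [Subtype.ext_iff]
    rw [hset]
    exact hxcl.preimage continuous_subtype_val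
  have hsclT : IsClosed ({⟨s, hsT⟩} : Set t) := by
    have hset : ({⟨s, hsT⟩} : Set t) = Subtype.val ⁻¹' {s} := by
      ext y; simp [Subtype.ext_iff]
    rw [hset]
    exact hs.preimage continuous_subtype_val
  set Yx : IrreducibleCloseds t := ⟨{⟨x, hxT⟩}, isIrreducible_singleton, hxclT⟩ with hYx
  set Ys' : IrreducibleCloseds t := ⟨{⟨s, hsT⟩}, isIrreducible_singleton, hsclT⟩ with hYs'
  have hYxle : Yx ≤ q'.head := by
    intro z hz
    have hzx : z = ⟨x, hxT⟩ := hz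
    rw [hzx]
    exact hxZ
  have hlen1 : (q'.length : ℕ∞) ≤ codimAbove Yx := by
    rcases eq_or_lt_of_le hYxle with heq | hlt
    · exact le_iSup
        (fun r : {r : LTSeries (IrreducibleCloseds t) // r.head = Yx} => (r.1.length : ℕ∞))
        ⟨q', heq.symm⟩
    · have h2 : ((q'.cons Yx hlt).length : ℕ∞) ≤ codimAbove Yx := le_iSup
        (fun r : {r : LTSeries (IrreducibleCloseds t) // r.head = Yx} => (r.1.length : ℕ∞))
        ⟨q'.cons Yx hlt, RelSeries.head_cons _ _ _⟩
      refine le_trans ?_ h2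
      have hlc : (q'.cons Yx hlt).length = q'.length + 1 := by
        show 0 + q'.length + 1 = q'.length + 1
        omega
      rw [hlc]
      exact_mod_cast Nat.le_succ q'.length
  have hequi : codimAbove Yx = codimAbove Ys' := hcomp t hTcomp Yx Ys'
    (isMin_singletonIC hxclT) (isMin_singletonIC hsclT)
  have hlast : codimAbove Ys' ≤ codimAbove Ys := by
    rw [codimAbove]
    refine iSup_le ?_
    rintro ⟨r, hr⟩
    have hce := hTclosed.isClosedEmbedding_subtypeVal
    set rmap : LTSeries (IrreducibleCloseds S) :=
      r.map (IrreducibleCloseds.map Subtype.val hce.continuous)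
        (IrreducibleCloseds.map_strictMono_of_isInducing hce.isInducing) with hrmap
    have hhead : rmap.head = Ys := by
      rw [hrmap, LTSeries.head_map, hr]
      apply SetLike.ext'
      show closure (Subtype.val '' ({⟨s, hsT⟩} : Set t)) = ({s} : Set S)
      rw [Set.image_singleton, hs.closure_eq]
    exact le_iSup
      (fun w : {w : LTSeries (IrreducibleCloseds S) // w.head = Ys} => (w.1.length : ℕ∞))
      ⟨rmap, hhead⟩
  calc (q.length : ℕ∞) = (q'.length : ℕ∞) := rfl
    _ ≤ codimAbove Yx := hlen1
    _ = codimAbove Ys' := hequi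
    _ ≤ codimAbove Ys := hlast

end part4

theorem localDim_eq_ringKrullDim_stalk (S : Scheme) (hJ : JacobsonSpace S)
    (hcat : IsCatenarySpace S) [IsLocallyNoetherian S]
    (hcomp : ∀ T ∈ irreducibleComponents S,
      topologicalKrullDim ↥T ≠ ⊤ ∧ IsEquicodim ↥T)
    (s : S) (hs : IsClosed ({s} : Set S)) :
    localDim S s = ringKrullDim (S.presheaf.stalk s) := by
  rw [ringKrullDim_stalk_eq_codimAbove S s hs]
  apply le_antisymm
  · obtain ⟨U, hUopen, hsU, hgood⟩ := exists_good_open S s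
    exact le_trans (iInf_le _ ⟨U, hUopen, hsU⟩)
      (dim_open_le S hJ (fun T hT => (hcomp T hT).2) s hs hsU hgood)
  · exact le_iInf fun U => codimAbove_le_dim_open hs U.2.1 U.2.2
end

section
/- Let X be an irreducible, finite-dimensional, Jacobson topological space in which all maximal chains of irreducible closed subsets have the same length. Then for every closed point x ∈ X and every irreducible closed subset Z containing x, dim Z + codim(Z, X) = dim X. -/
open TopologicalSpace Order

section Aux

lemma aux_attained {ι : Type*} [Nonempty ι] (f : ι → ℕ) (n : ℕ) (h : ∀ i, f i ≤ n) :
    ∃ i, (⨆ j, ((f j : ℕ∞))) = f i ∧ ∀ j, f j ≤ f i := by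
  have hS : (Set.range f).Nonempty := Set.range_nonempty f
  have hbdd : BddAbove (Set.range f) := ⟨n, by rintro _ ⟨i, rfl⟩; exact h i⟩
  obtain ⟨i, hi⟩ := Nat.sSup_mem hS hbdd
  refine ⟨i, ?_, fun j => hi ▸ le_csSup hbdd ⟨j, rfl⟩⟩
  refine le_antisymm (iSup_le fun j => Nat.cast_le.2 ?_) (le_iSup (fun j => ((f j : ℕ∞))) i)
  exact hi ▸ le_csSup hbdd ⟨j, rfl⟩

variable {α : Type*} {r : SetRel α α}

lemma insertNth_head (p : RelSeries r) (i : Fin p.length) (a : α)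
    (h1 : (p i.castSucc, a) ∈ r) (h2 : (a, p i.succ) ∈ r) :
    (p.insertNth i a h1 h2).head = p.head := by
  have h0 : (0 : Fin (p.length + 1 + 1)) < Fin.castSucc i.succ := by
    simp [Fin.lt_def]
  show (p.insertNth i a h1 h2).toFun 0 = p.head
  change Fin.insertNth (α := fun _ => α) (Fin.castSucc i.succ) a p.toFun (0 : Fin (p.length + 1 + 1)) = p.head
  rw [Fin.insertNth_apply_below h0]
  simp [RelSeries.head]

lemma insertNth_last (p : RelSeries r) (i : Fin p.length) (a : α)
    (h1 : (p i.castSucc, a) ∈ r) (h2 : (a, p i.succ) ∈ r) :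
    (p.insertNth i a h1 h2).last = p.last := by
  have h0 : Fin.castSucc i.succ < Fin.last (p.length + 1) := by
    simp only [Fin.lt_def, Fin.coe_castSucc, Fin.val_succ, Fin.val_last]
    omega
  show (p.insertNth i a h1 h2).toFun (Fin.last (p.length + 1)) = p.last
  rw [RelSeries.insertNth_toFun, Fin.insertNth_apply_above h0]
  simp only [eq_rec_constant, RelSeries.last]
  congr 1

end Aux

section Sat

variable {X : Type*} [TopologicalSpace X]

lemma smash_saturated (p q : LTSeries (IrreducibleCloseds X)) (h : p.last = q.head)
    (hp : IsSaturatedChain p) (hq : IsSaturatedChain q) :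
    IsSaturatedChain (p.smash q h) := by
  intro i
  have hi2 : i.1 < p.length + q.length := i.2
  by_cases hi : i.1 < p.length
  · have := hp ⟨i.1, hi⟩
    rw [← RelSeries.smash_castAdd h ⟨i.1, hi⟩, ← RelSeries.smash_succ_castAdd h ⟨i.1, hi⟩]
      at this
    convert this using 2 <;> exact congrArg _ (Fin.ext (by simp))
  · have := hq ⟨i.1 - p.length, by omega⟩
    rw [← RelSeries.smash_natAdd h ⟨i.1 - p.length, by omega⟩,
      ← RelSeries.smash_succ_natAdd h ⟨i.1 - p.length, by omega⟩] at this
    convert this using 2 <;> exact congrArg _ (Fin.ext (by simp; omega))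

end Sat

theorem dim_add_codim_of_equal_maximal_chains (X : Type*) [TopologicalSpace X]
    [IrreducibleSpace X] [JacobsonSpace X] (hfin : spaceDim X ≠ ⊤)
    (hmax : ∀ p q : LTSeries (IrreducibleCloseds X),
      IsMaximalChain p → IsMaximalChain q → p.length = q.length) :
    ∀ x : X, IsClosed ({x} : Set X) → ∀ Z : IrreducibleCloseds X, x ∈ Z →
      chainDim Z +
        relCodim Z ⟨Set.univ, IrreducibleSpace.isIrreducible_univ X, isClosed_univ⟩ =
        spaceDim X := by
  intro x hx Z hxZ
  set T : IrreducibleCloseds X :=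
    ⟨Set.univ, IrreducibleSpace.isIrreducible_univ X, isClosed_univ⟩ with hT
  have hle : ∀ W : IrreducibleCloseds X, W ≤ T := fun W => Set.subset_univ _
  have hTmax : IsMax T := fun b _ => hle b
  -- uniform bound on chain lengths
  obtain ⟨n, hn'⟩ := WithTop.ne_top_iff_exists.mp hfin
  have hn : ∀ p : LTSeries (IrreducibleCloseds X), p.length ≤ n := fun p => by
    have := le_iSup (fun p : LTSeries (IrreducibleCloseds X) => ((p.length : ℕ∞))) p
    rw [show spaceDim X = ⨆ p : LTSeries (IrreducibleCloseds X), ((p.length : ℕ∞)) from rfl]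
      at hn'
    rw [← hn'] at this
    exact Nat.cast_le.mp this
  -- maximizer for chainDim Z
  have : Nonempty {p : LTSeries (IrreducibleCloseds X) // p.last ≤ Z} :=
    ⟨⟨RelSeries.singleton _ Z, le_refl _⟩⟩
  obtain ⟨⟨p, hpZ⟩, hp_eq, hp_max⟩ :=
    aux_attained (fun p : {p : LTSeries (IrreducibleCloseds X) // p.last ≤ Z} => p.1.length)
      n (fun p => hn p.1)
  have hplast : p.last = Z := by
    by_contra h
    have hlt : p.last < Z := lt_of_le_of_ne hpZ h
    have := hp_max ⟨p.snoc Z hlt, by simp⟩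
    simp [RelSeries.snoc_length] at this
  have hpmin : IsMin p.head := by
    by_contra h
    obtain ⟨W, hW⟩ := not_isMin_iff.mp h
    have := hp_max ⟨p.cons W hW, by simpa using hpZ⟩
    simp [RelSeries.cons_length] at this
  have hpsat : IsSaturatedChain p := by
    intro i
    by_contra h
    obtain ⟨c, hc1, hc2⟩ := (p.step i).exists_lt_lt h
    have := hp_max ⟨p.insertNth i c hc1 hc2, by rw [insertNth_last]; exact hpZ⟩
    simp [RelSeries.insertNth] at this
  -- maximizer for relCodim Z T
  have : Nonempty {p : LTSeries (IrreducibleCloseds X) // p.head = Z ∧ p.last = T} := by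
    rcases eq_or_lt_of_le (hle Z) with h | h
    · exact ⟨⟨RelSeries.singleton _ Z, rfl, h.symm ▸ rfl⟩⟩
    · exact ⟨⟨(RelSeries.singleton _ Z).snoc T h, rfl, by exact RelSeries.last_snoc _ _ _⟩⟩
  obtain ⟨⟨q, hqh, hql⟩, hq_eq, hq_max⟩ :=
    aux_attained
      (fun p : {p : LTSeries (IrreducibleCloseds X) // p.head = Z ∧ p.last = T} => p.1.length)
      n (fun p => hn p.1)
  have hqsat : IsSaturatedChain q := by
    intro i
    by_contra h
    obtain ⟨c, hc1, hc2⟩ := (q.step i).exists_lt_lt h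
    have := hq_max ⟨q.insertNth i c hc1 hc2,
      by rw [insertNth_head, insertNth_last]; exact ⟨hqh, hql⟩⟩
    simp [RelSeries.insertNth] at this
  -- maximizer for spaceDim
  have : Nonempty (LTSeries (IrreducibleCloseds X)) := ⟨RelSeries.singleton _ T⟩
  obtain ⟨r, hr_eq, hr_max⟩ :=
    aux_attained (fun p : LTSeries (IrreducibleCloseds X) => p.length) n hn
  have hrmin : IsMin r.head := by
    by_contra h
    obtain ⟨W, hW⟩ := not_isMin_iff.mp h
    have := hr_max (r.cons W hW)
    simp [RelSeries.cons_length] at this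
  have hrmax : IsMax r.last := by
    by_contra h
    obtain ⟨W, hW⟩ := not_isMax_iff.mp h
    have := hr_max (r.snoc W hW)
    simp [RelSeries.snoc_length] at this
  have hrsat : IsSaturatedChain r := by
    intro i
    by_contra h
    obtain ⟨c, hc1, hc2⟩ := (r.step i).exists_lt_lt h
    have := hr_max (r.insertNth i c hc1 hc2)
    simp [RelSeries.insertNth] at this
  -- combine
  have hconn : p.last = q.head := hplast.trans hqh.symm
  set s := p.smash q hconn with hs
  have hssat : IsSaturatedChain s := smash_saturated p q hconn hpsat hqsat
  have hshead : s.head = p.head := RelSeries.head_smash hconn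
  have hslast : s.last = q.last := RelSeries.last_smash hconn
  have hsmaximal : IsMaximalChain s := ⟨hssat, hshead ▸ hpmin, hslast ▸ hql ▸ hTmax⟩
  have hrmaximal : IsMaximalChain r := ⟨hrsat, hrmin, hrmax⟩
  have hlen : s.length = r.length := hmax s r hsmaximal hrmaximal
  have hslen : s.length = p.length + q.length := rfl
  have hsd : spaceDim X = (r.length : ℕ∞) := hr_eq
  have hcd : chainDim Z = (p.length : ℕ∞) := hp_eq
  have hrc : relCodim Z T = (q.length : ℕ∞) := hq_eq
  rw [hcd, hrc, hsd, ← hlen, hslen]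
  push_cast
  ring
end
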